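/- arXiv:1604.05757 — 10 statements merged into one kernel-verified Lean document; each statement's English description precedes it below -/
import Mathlib

section
/- Let r ≥ 3, n ≥ 1 and S ⊆ [r]^n with μ(S) = |S|/r^n, and suppose S does not contain a combinatorial line. Then there exists an r-prover game G with question set Q̄_r and with all answer alphabets equal to 2^[n] × [n] such that val(G) ≤ 1 − 1/r and val(G^n) ≥ μ(S). -/
/-- The value of an `r`-prover game: the question set is `Qbar`, a finite set of
question tuples; `V` is the verification predicate; the value is the maximum over
strategies (one function `Q j → A j` per prover) of the probability, over a uniformly
random question tuple from `Qbar`, that the verifier accepts. -/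
noncomputable def gameValue {r : ℕ} {Q A : Fin r → Type}
    (Qbar : Finset (∀ j, Q j)) (V : (∀ j, Q j) → (∀ j, A j) → Bool) : ℝ :=
  sSup { x : ℝ | ∃ S : ∀ j, Q j → A j,
    x = ((Qbar.filter fun q => V q (fun j => S j (q j)) = true).card : ℝ) / (Qbar.card : ℝ) }

/-- The value of the `n`-fold parallel repetition of a game: questions are `n`-tuples
of question tuples sampled independently and uniformly from `Qbar`, each prover `j`
sees only its own vector of questions, and the verifier accepts iff `V` accepts in
every coordinate. -/
noncomputable def repValue {r : ℕ} {Q A : Fin r → Type} [∀ j, DecidableEq (Q j)]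
    (n : ℕ) (Qbar : Finset (∀ j, Q j)) (V : (∀ j, Q j) → (∀ j, A j) → Bool) : ℝ :=
  sSup { x : ℝ | ∃ S : ∀ j, (Fin n → Q j) → (Fin n → A j),
    x = (((Fintype.piFinset fun _ : Fin n => Qbar).filter fun q =>
          ∀ i, V (q i) (fun j => S j (fun i' => q i' j) i) = true).card : ℝ) /
        ((Fintype.piFinset fun _ : Fin n => Qbar).card : ℝ) }

/-- The question set `Q̄_r ⊆ {0,1}^r`: tuples with exactly one coordinate equal to 1. -/
def QbarR (r : ℕ) : Finset (Fin r → Bool) :=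
  Finset.univ.filter fun q => (Finset.univ.filter fun j => q j = true).card = 1

/-- The point of a combinatorial pattern `b` (wildcard = `none`) at `q`. -/
def patternLine {r n : ℕ} (b : Fin n → Option (Fin r)) (q : Fin r) : Fin n → Fin r :=
  fun i => (b i).getD q

/-- `S ⊆ [r]^n` contains a combinatorial line. -/
def HasCombLine {r n : ℕ} (S : Set (Fin n → Fin r)) : Prop :=
  ∃ b : Fin n → Option (Fin r), (∃ i, b i = none) ∧ ∀ q : Fin r, patternLine b q ∈ S


lemma mem_QbarR {r : ℕ} (k : Fin r) : (fun j => decide (j = k)) ∈ QbarR r := by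
  simp only [QbarR, Finset.mem_filter, Finset.mem_univ, true_and]
  have : (Finset.univ.filter fun j : Fin r => decide (j = k) = true) = {k} := by
    ext j; simp
  rw [this]; simp

lemma QbarR_eq {r : ℕ} : QbarR r = Finset.univ.image (fun (k : Fin r) (j : Fin r) => decide (j = k)) := by
  ext q
  constructor
  · intro hq
    simp only [QbarR, Finset.mem_filter, Finset.mem_univ, true_and] at hq
    obtain ⟨a, ha⟩ := Finset.card_eq_one.mp hq
    simp only [Finset.mem_image, Finset.mem_univ, true_and]
    have hmem : ∀ j : Fin r, q j = true ↔ j = a := by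
      intro j
      rw [show (j = a) ↔ j ∈ ({a} : Finset (Fin r)) from by simp, ← ha]
      simp
    refine ⟨a, ?_⟩
    funext j
    cases hqj : q j
    · simp only [decide_eq_false_iff_not]
      intro h'; simp [(hmem j).mpr h'] at hqj
    · exact decide_eq_true ((hmem j).mp hqj)
  · intro hq
    simp only [Finset.mem_image, Finset.mem_univ, true_and] at hq
    obtain ⟨k, rfl⟩ := hq
    exact mem_QbarR k

lemma card_QbarR {r : ℕ} : (QbarR r).card = r := by
  rw [QbarR_eq, Finset.card_image_of_injective]
  · simp
  · intro k k' h
    have h1 : (decide (k = k) : Bool) = decide (k = k') := congrFun h k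
    simpa using h1

/-- The verification predicate of the game built from `S`. -/
def Pred {r n : ℕ} (S : Finset (Fin n → Fin r)) (q : Fin r → Bool)
    (a : Fin r → Finset (Fin n) × Fin n) : Prop :=
  (∀ j j' : Fin r, (a j).2 = (a j').2) ∧
  (∀ j : Fin r, ((a j).2 ∈ (a j).1 ↔ q j = true)) ∧
  (∀ i : Fin n, ∃! j : Fin r, i ∈ (a j).1) ∧
  (∀ τ : Fin n → Fin r, (∀ i, i ∈ (a (τ i)).1) → τ ∈ S)

open Classical in
/-- The game built from `S`, as a Bool-valued verifier. -/
noncomputable def Vgame {r n : ℕ} (S : Finset (Fin n → Fin r)) (q : Fin r → Bool)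
    (a : Fin r → Finset (Fin n) × Fin n) : Bool :=
  decide (Pred S q a)

lemma Vgame_iff {r n : ℕ} (S : Finset (Fin n → Fin r)) (q : Fin r → Bool)
    (a : Fin r → Finset (Fin n) × Fin n) : Vgame S q a = true ↔ Pred S q a := by
  simp [Vgame]

/-- Soundness: if some strategy wins every question, `S` has a combinatorial line. -/
lemma sound {r n : ℕ} (hr : 3 ≤ r) (S : Finset (Fin n → Fin r))
    (T : Fin r → Bool → Finset (Fin n) × Fin n)
    (H : ∀ k : Fin r, Pred S (fun j => decide (j = k)) (fun j => T j (decide (j = k)))) :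
    HasCombLine (↑S : Set (Fin n → Fin r)) := by
  classical
  have hr0 : 0 < r := by omega
  have Hsec : ∀ k j j' : Fin r,
      (T j (decide (j = k))).2 = (T j' (decide (j' = k))).2 := fun k => (H k).1
  have Hmem : ∀ k j : Fin r,
      ((T j (decide (j = k))).2 ∈ (T j (decide (j = k))).1 ↔ (decide (j = k) : Bool) = true) :=
    fun k => (H k).2.1
  have Hpart : ∀ (k : Fin r) (i : Fin n), ∃! j : Fin r, i ∈ (T j (decide (j = k))).1 :=
    fun k => (H k).2.2.1
  have Hline : ∀ (k : Fin r) (τ : Fin n → Fin r),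
      (∀ i, i ∈ (T (τ i) (decide (τ i = k))).1) → τ ∈ S := fun k => (H k).2.2.2
  -- notation
  set E0 : Fin r → Finset (Fin n) := fun j => (T j false).1 with hE0
  -- a third index distinct from any two
  have hthird : ∀ j j' : Fin r, ∃ k : Fin r, k ≠ j ∧ k ≠ j' := by
    intro j j'
    by_contra h
    push_neg at h
    have hsub : (Finset.univ : Finset (Fin r)) ⊆ {j, j'} := by
      intro k _
      by_cases hk : k = j
      · simp [hk]
      · simp [h k hk]
    have := Finset.card_le_card hsub
    have h2 : ({j, j'} : Finset (Fin r)).card ≤ 2 := Finset.card_insert_le _ _ |>.trans (by simp)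
    simp only [Finset.card_univ, Fintype.card_fin] at this
    omega
  -- rewriting helper
  have hTfalse : ∀ (k j : Fin r), j ≠ k → T j (decide (j = k)) = T j false := by
    intro k j hjk; rw [decide_eq_false hjk]
  have hTtrue : ∀ k : Fin r, T k (decide (k = k)) = T k true := by
    intro k; rw [decide_eq_true rfl]
  -- uniqueness of false-set ownership
  have uniq0 : ∀ (i : Fin n) (j j' : Fin r), i ∈ E0 j → i ∈ E0 j' → j = j' := by
    intro i j j' hj hj'
    obtain ⟨k, hkj, hkj'⟩ := hthird j j'
    obtain ⟨w, hw, hu⟩ := Hpart k i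
    have h1 : j = w := hu j (show i ∈ (T j (decide (j = k))).1 by
      rw [hTfalse k j (fun h => hkj h.symm)]; exact hj)
    have h2 : j' = w := hu j' (show i ∈ (T j' (decide (j' = k))).1 by
      rw [hTfalse k j' (fun h => hkj' h.symm)]; exact hj')
    rw [h1, h2]
  -- all the "second components" agree
  have hsec : ∀ (k j : Fin r), j ≠ k → (T k true).2 = (T j false).2 := by
    intro k j hjk
    have := Hsec k k j
    rwa [hTtrue k, hTfalse k j hjk] at this
  -- the special coordinate
  obtain ⟨k0, hk0, -⟩ := hthird (Fin.mk 0 hr0) (Fin.mk 0 hr0)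
  set istar : Fin n := (T k0 true).2 with histar
  have hallsec : ∀ j : Fin r, istar = (T j false).2 := by
    intro j
    by_cases hjk : j = k0
    · subst hjk
      obtain ⟨k1, hk1, -⟩ := hthird j j
      obtain ⟨k2, hk2a, hk2b⟩ := hthird k1 j
      have e1 : (T k1 true).2 = (T j false).2 := hsec k1 j (fun h => hk1 h.symm)
      have e2 : (T k1 true).2 = (T k2 false).2 := hsec k1 k2 hk2a
      have e3 : (T j true).2 = (T k2 false).2 := hsec j k2 hk2b
      rw [histar, e3, ← e2, e1]
    · exact hsec k0 j hjk
  -- istar is in no false-set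
  have hstar : ∀ j : Fin r, istar ∉ E0 j := by
    intro j hmem
    obtain ⟨k, hkj, -⟩ := hthird j j
    have hiff := Hmem k j
    rw [hTfalse k j (fun h => hkj h.symm)] at hiff
    have hm2 : (T j false).2 ∈ (T j false).1 := by
      rw [← hallsec j]; exact hmem
    exact hkj (decide_eq_true_eq.mp (hiff.mp hm2)).symm
  -- the pattern
  set b : Fin n → Option (Fin r) :=
    fun i => if h : ∃ j, i ∈ E0 j then some h.choose else none with hb
  have hbnone : b istar = none := by
    rw [hb]; simp only
    rw [dif_neg]
    rintro ⟨j, hj⟩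
    exact hstar j hj
  refine ⟨b, ⟨istar, hbnone⟩, ?_⟩
  intro k
  have key : ∀ i, i ∈ (T (patternLine b k i) (decide (patternLine b k i = k))).1 := by
    intro i
    by_cases h : ∃ j, i ∈ E0 j
    · have hτ : patternLine b k i = h.choose := by
        simp [patternLine, hb, dif_pos h]
      have hjmem : i ∈ E0 h.choose := h.choose_spec
      rw [hτ]
      by_cases hjk : h.choose = k
      · rw [hjk]
        obtain ⟨w, hw, hu⟩ := Hpart k i
        by_cases hwk : w = k
        · subst hwk; exact hw
        · exfalso
          rw [hTfalse k w hwk] at hw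
          exact hwk ((uniq0 i w h.choose hw hjmem).trans hjk)
      · rw [hTfalse k h.choose hjk]
        exact hjmem
    · have hτ : patternLine b k i = k := by
        simp [patternLine, hb, dif_neg h]
      rw [hτ]
      obtain ⟨w, hw, hu⟩ := Hpart k i
      by_cases hwk : w = k
      · subst hwk; exact hw
      · exfalso
        rw [hTfalse k w hwk] at hw
        exact h ⟨w, hw⟩
  exact Hline k (patternLine b k) key

/-- If `r ≥ 3`, `n ≥ 1` and `S ⊆ [r]^n` contains no combinatorial line, then there is an
`r`-prover game with question set `Q̄_r` and all answer alphabets `2^[n] × [n]` whose value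
is at most `1 - 1/r` and whose `n`-fold repeated value is at least `μ(S) = |S|/rⁿ`. -/
theorem statement0 (r n : ℕ) (hr : 3 ≤ r) (hn : 1 ≤ n)
    (S : Finset (Fin n → Fin r)) (hS : ¬ HasCombLine (↑S : Set (Fin n → Fin r))) :
    ∃ V : (Fin r → Bool) → (Fin r → Finset (Fin n) × Fin n) → Bool,
      gameValue (QbarR r) V ≤ 1 - 1 / (r : ℝ) ∧
      (S.card : ℝ) / (r : ℝ) ^ n ≤ repValue n (QbarR r) V := by
  classical
  have hr0 : 0 < r := by omega
  have hrpos : (0:ℝ) < (r:ℝ) := by exact_mod_cast hr0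
  refine ⟨Vgame S, ?_, ?_⟩
  · -- value of the single game
    apply Real.sSup_le
    · rintro x ⟨T, rfl⟩
      set F := (QbarR r).filter (fun q => Vgame S q (fun j => T j (q j)) = true) with hF
      have hsub : F ⊆ QbarR r := Finset.filter_subset _ _
      have hcard : F.card ≤ r - 1 := by
        by_contra hlt
        push_neg at hlt
        have hFeq : F = QbarR r := by
          apply Finset.eq_of_subset_of_card_le hsub
          have := Finset.card_le_card hsub
          rw [card_QbarR] at this ⊢
          omega
        apply hS
        apply sound hr S T
        intro k
        have hk : (fun j : Fin r => decide (j = k)) ∈ F := hFeq ▸ mem_QbarR k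
        rw [hF, Finset.mem_filter] at hk
        exact (Vgame_iff S _ _).mp hk.2
      have hcast : (F.card : ℝ) ≤ (r : ℝ) - 1 := by
        have h1 : (F.card : ℝ) ≤ ((r - 1 : ℕ) : ℝ) := by exact_mod_cast hcard
        rwa [Nat.cast_sub (by omega), Nat.cast_one] at h1
      rw [card_QbarR]
      have heq : (1 : ℝ) - 1 / (r:ℝ) = ((r:ℝ) - 1) / (r:ℝ) := by field_simp
      rw [heq]
      gcongr
    · rw [sub_nonneg]
      rw [div_le_one hrpos]
      exact_mod_cast hr0
  · -- value of the repeated game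
    have hpicard : ((Fintype.piFinset fun _ : Fin n => QbarR r).card : ℝ) = (r:ℝ) ^ n := by
      rw [Fintype.card_piFinset]
      simp [card_QbarR]
    -- the honest strategy
    set Thon : ∀ _ : Fin r, (Fin n → Bool) → (Fin n → Finset (Fin n) × Fin n) :=
      fun _ E i => (Finset.univ.filter fun i' => E i' = true, i) with hThon
    set F := (Fintype.piFinset fun _ : Fin n => QbarR r).filter
        (fun q => ∀ i, Vgame S (q i) (fun j => Thon j (fun i' => q i' j) i) = true) with hF
    have hmemx : ((F.card : ℝ) / ((Fintype.piFinset fun _ : Fin n => QbarR r).card : ℝ)) ∈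
        { x : ℝ | ∃ T : ∀ _ : Fin r, (Fin n → Bool) → (Fin n → Finset (Fin n) × Fin n),
          x = (((Fintype.piFinset fun _ : Fin n => QbarR r).filter fun q =>
                ∀ i, Vgame S (q i) (fun j => T j (fun i' => q i' j) i) = true).card : ℝ) /
              ((Fintype.piFinset fun _ : Fin n => QbarR r).card : ℝ) } := ⟨Thon, rfl⟩
    have hbdd : BddAbove { x : ℝ | ∃ T : ∀ _ : Fin r, (Fin n → Bool) → (Fin n → Finset (Fin n) × Fin n),
          x = (((Fintype.piFinset fun _ : Fin n => QbarR r).filter fun q =>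
                ∀ i, Vgame S (q i) (fun j => T j (fun i' => q i' j) i) = true).card : ℝ) /
              ((Fintype.piFinset fun _ : Fin n => QbarR r).card : ℝ) } := by
      refine ⟨1, ?_⟩
      rintro x ⟨T, rfl⟩
      apply div_le_one_of_le₀
      · exact_mod_cast Finset.card_le_card (Finset.filter_subset _ _)
      · positivity
    refine le_trans ?_ (le_csSup hbdd hmemx)
    rw [hpicard]
    gcongr
    · -- |S| ≤ number of accepted question tuples, via σ ↦ (i ↦ j ↦ decide (j = σ i))
      have hinj : ∀ σ ∈ S, (fun (i : Fin n) (j : Fin r) => decide (j = σ i)) ∈ F := by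
        intro σ hσ
        rw [hF, Finset.mem_filter]
        constructor
        · rw [Fintype.mem_piFinset]
          intro i
          exact mem_QbarR (σ i)
        · intro i
          rw [Vgame_iff]
          refine ⟨fun j j' => rfl, ?_, ?_, ?_⟩
          · intro j
            simp [hThon]
          · intro i''
            refine ⟨σ i'', by simp [hThon], ?_⟩
            intro y hy
            simp [hThon] at hy
            exact hy
          · intro τ hτ
            have : τ = σ := by
              funext i''
              have := hτ i''
              simp [hThon] at this
              exact this
            rw [this]; exact hσ
      have hinj2 : Set.InjOn (fun (σ : Fin n → Fin r) (i : Fin n) (j : Fin r) => decide (j = σ i))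
          ↑S := by
        intro σ _ σ' _ h
        funext i
        have h1 := congrFun (congrFun h i) (σ i)
        simp only [decide_eq_true_eq] at h1
        have : (decide (σ i = σ i) : Bool) = decide (σ i = σ' i) := by
          simpa using congrFun (congrFun h i) (σ i)
        simpa using this.symm
      have := Finset.card_le_card_of_injOn _ hinj hinj2
      exact_mod_cast this
end

section
/- Let r ≥ 3. For every n ≥ 1, ω_r^DHJ(n) ≤ ω_{Q̄_r}(n), i.e., the maximum measure of a combinatorial-line-free subset of [r]^n is at most the maximum of val(G^n) over all non-trivial games G with question set Q̄_r. -/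
/-- `ω_Q̄(n)`: the supremum of `val(Gⁿ)` over all non-trivial games `G` with question
set `Qbar` (quantifying over all finite nonempty answer alphabets and all verifiers). -/
noncomputable def omegaQ {r : ℕ} {Q : Fin r → Type} [∀ j, DecidableEq (Q j)]
    (Qbar : Finset (∀ j, Q j)) (n : ℕ) : ℝ :=
  sSup { x : ℝ | ∃ (A : Fin r → Type) (_ : ∀ j, Fintype (A j)) (_ : ∀ j, Nonempty (A j))
    (V : (∀ j, Q j) → (∀ j, A j) → Bool),
      gameValue Qbar V ≠ 1 ∧ x = repValue n Qbar V }
/-- `ω_r^DHJ(n)`: the supremum of the measures `|S|/rⁿ` of subsets `S ⊆ [r]^n`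
containing no combinatorial line. -/
noncomputable def omegaDHJ (r n : ℕ) : ℝ :=
  sSup { x : ℝ | ∃ S : Finset (Fin n → Fin r),
    ¬ HasCombLine (↑S : Set (Fin n → Fin r)) ∧ x = (S.card : ℝ) / (r : ℝ) ^ n }

namespace DHJaux

def toQ (r : ℕ) (c : Fin r) : Fin r → Bool := fun j => decide (j = c)

lemma toQ_mem {r : ℕ} (c : Fin r) : toQ r c ∈ QbarR r := by
  simp only [QbarR, Finset.mem_filter, Finset.mem_univ, true_and]
  rw [Finset.card_eq_one]
  refine ⟨c, ?_⟩
  ext j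
  simp [toQ]

lemma mem_QbarR_iff {r : ℕ} {q : Fin r → Bool} : q ∈ QbarR r ↔ ∃ c, q = toQ r c := by
  constructor
  · intro h
    simp only [QbarR, Finset.mem_filter, Finset.mem_univ, true_and] at h
    obtain ⟨c, hc⟩ := Finset.card_eq_one.1 h
    refine ⟨c, funext fun j => ?_⟩
    have hmem : ∀ j : Fin r, q j = true ↔ j = c := by
      intro j
      constructor
      · intro hj
        have : j ∈ Finset.univ.filter fun j => q j = true := by simp [hj]
        rw [hc] at this; simpa using this
      · intro hj
        subst hj
        have : j ∈ ({j} : Finset (Fin r)) := by simp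
        rw [← hc] at this; simpa using this
    by_cases hq : q j = true
    · have hjc : j = c := (hmem j).1 hq
      subst hjc
      simp [toQ, hq]
    · have h1 : q j = false := by simpa using hq
      have h2 : ¬ j = c := fun h => hq ((hmem j).2 h)
      simp [toQ, h1, h2]
  · rintro ⟨c, rfl⟩; exact toQ_mem c

lemma toQ_inj {r : ℕ} : Function.Injective (toQ r) := by
  intro c c' h
  have := congrFun h c
  simp [toQ] at this
  exact this

lemma QbarR_card {r : ℕ} : (QbarR r).card = r := by
  have : QbarR r = Finset.image (toQ r) Finset.univ := by
    ext q
    simp only [Finset.mem_image, Finset.mem_univ, true_and]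
    rw [mem_QbarR_iff]
    constructor
    · rintro ⟨c, rfl⟩; exact ⟨c, rfl⟩
    · rintro ⟨c, rfl⟩; exact ⟨c, rfl⟩
  rw [this, Finset.card_image_of_injective _ toQ_inj, Finset.card_univ, Fintype.card_fin]

def Ver {r n : ℕ} (S : Finset (Fin n → Fin r)) (q : Fin r → Bool)
    (a : Fin r → Fin n × (Fin n → Bool)) : Bool :=
  decide ((∀ j k : Fin r, (a j).1 = (a k).1) ∧
    (∃ p ∈ S, ∀ (i : Fin n) (j : Fin r), (a j).2 i = decide (p i = j)) ∧
    (∀ j : Fin r, q j = true → (a j).2 (a j).1 = true))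


def Phi {r n : ℕ} (p : Fin n → Fin r) : Fin n → (Fin r → Bool) := fun i => toQ r (p i)

lemma Phi_inj {r n : ℕ} : Function.Injective (Phi (r := r) (n := n)) := by
  intro p p' h
  funext i
  exact toQ_inj (congrFun h i)

def Str {r n : ℕ} : ∀ _j : Fin r, (Fin n → Bool) → (Fin n → Fin n × (Fin n → Bool)) :=
  fun _ x i => (i, x)

lemma honest_filter {r n : ℕ} (hn : 1 ≤ n) (S : Finset (Fin n → Fin r)) :
    ((Fintype.piFinset fun _ : Fin n => QbarR r).filter fun q =>
        ∀ i, Ver S (q i) (fun j => Str j (fun i' => q i' j) i) = true) =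
      Finset.image Phi S := by
  ext q
  simp only [Finset.mem_filter, Finset.mem_image, Fintype.mem_piFinset]
  constructor
  · rintro ⟨hq, hacc⟩
    have h0 := hacc ⟨0, hn⟩
    simp only [Ver, Str, decide_eq_true_eq] at h0
    obtain ⟨-, ⟨p, hp, hfib⟩, -⟩ := h0
    refine ⟨p, hp, ?_⟩
    funext i j
    have := hfib i j
    simp only [Phi, toQ]
    rw [this]
    simp [eq_comm]
  · rintro ⟨p, hp, rfl⟩
    refine ⟨fun i => toQ_mem (p i), fun i => ?_⟩
    simp only [Ver, Str, decide_eq_true_eq]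
    refine ⟨fun j k => trivial, ⟨p, hp, fun i' j => ?_⟩, fun j hj => ?_⟩
    · simp [Phi, toQ, eq_comm]
    · exact hj

lemma piFinset_card {r n : ℕ} :
    (Fintype.piFinset fun _ : Fin n => QbarR r).card = r ^ n := by
  rw [Fintype.card_piFinset]
  simp [QbarR_card]


lemma exists_third {r : ℕ} (hr : 3 ≤ r) (j k : Fin r) : ∃ c : Fin r, c ≠ j ∧ c ≠ k := by
  by_contra h
  push_neg at h
  have hsub : (Finset.univ : Finset (Fin r)) ⊆ {j, k} := by
    intro c _
    simp only [Finset.mem_insert, Finset.mem_singleton]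
    by_cases hc : c = j
    · exact Or.inl hc
    · exact Or.inr (h c hc)
  have h1 := Finset.card_le_card hsub
  have h2 : ({j, k} : Finset (Fin r)).card ≤ 2 :=
    le_trans (Finset.card_insert_le _ _) (by simp)
  simp only [Finset.card_univ, Fintype.card_fin] at h1
  omega

lemma exists_reject {r n : ℕ} (hr : 3 ≤ r) {S : Finset (Fin n → Fin r)}
    (hS : ¬ HasCombLine (↑S : Set (Fin n → Fin r)))
    (T : ∀ _j : Fin r, Bool → Fin n × (Fin n → Bool)) :
    ∃ q ∈ QbarR r, Ver S q (fun j => T j (q j)) = false := by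
  by_contra hcon
  push_neg at hcon
  have hacc : ∀ c : Fin r,
      (∀ j k : Fin r, (T j (toQ r c j)).1 = (T k (toQ r c k)).1) ∧
      (∃ p ∈ S, ∀ i j, (T j (toQ r c j)).2 i = decide (p i = j)) ∧
      (∀ j, toQ r c j = true → (T j (toQ r c j)).2 (T j (toQ r c j)).1 = true) := by
    intro c
    have h0 := hcon (toQ r c) (toQ_mem c)
    have h : Ver S (toQ r c) (fun j => T j (toQ r c j)) = true := by
      revert h0
      cases hV : Ver S (toQ r c) (fun j => T j (toQ r c j)) <;> simp
    simpa only [Ver, decide_eq_true_eq] using h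
  have hr0 : 0 < r := by omega
  -- witnesses
  choose p hp hfib using fun c => (hacc c).2.1
  have htoQ_ne : ∀ {j c : Fin r}, j ≠ c → toQ r c j = false := by
    intro j c hj; simp [toQ, hj]
  have htoQ_eq : ∀ (c : Fin r), toQ r c c = true := by intro c; simp [toQ]
  -- fibers via false-answers
  have hfib0 : ∀ (c j : Fin r), j ≠ c → ∀ i, (T j false).2 i = decide (p c i = j) := by
    intro c j hj i
    have := hfib c i j
    rwa [htoQ_ne hj] at this
  have hfib1 : ∀ (c : Fin r) (i : Fin n), (T c true).2 i = decide (p c i = c) := by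
    intro c i
    have := hfib c i c
    rwa [htoQ_eq] at this
  -- all first components of false-answers agree
  have hi0 : ∀ j k : Fin r, (T j false).1 = (T k false).1 := by
    intro j k
    obtain ⟨c, hcj, hck⟩ := exists_third hr j k
    have := (hacc c).1 j k
    rwa [htoQ_ne (fun h => hcj h.symm), htoQ_ne (fun h => hck h.symm)] at this
  set j0 : Fin r := ⟨0, hr0⟩ with hj0
  set istar : Fin n := (T j0 false).1 with histar
  have hi1 : ∀ c : Fin r, (T c true).1 = istar := by
    intro c
    obtain ⟨k, hk, -⟩ := exists_third hr c c
    have h1 := (hacc c).1 c k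
    rw [htoQ_eq, htoQ_ne (fun h => hk h)] at h1
    rw [h1]
    exact hi0 k j0
  -- claimant uniqueness
  have huniq : ∀ (i : Fin n) (j k : Fin r), j ≠ k →
      (T j false).2 i = true → (T k false).2 i = true → False := by
    intro i j k hjk hj hk
    obtain ⟨c, hcj, hck⟩ := exists_third hr j k
    have h1 := hfib0 c j (fun h => hcj h.symm) i
    have h2 := hfib0 c k (fun h => hck h.symm) i
    rw [hj] at h1; rw [hk] at h2
    have e1 : p c i = j := of_decide_eq_true h1.symm
    have e2 : p c i = k := of_decide_eq_true h2.symm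
    exact hjk (e1.symm.trans e2)
  have hD4 : ∀ (c : Fin r) (i : Fin n), (T c false).2 i = true → p c i = c := by
    intro c i hc
    by_contra hne
    have h1 := hfib0 c (p c i) hne i
    have h2 : (T (p c i) false).2 i = true := by rw [h1]; simp
    exact huniq i c (p c i) (fun h => hne h.symm) hc h2
  -- the pattern
  set b : Fin n → Option (Fin r) :=
    fun i => if h : ∃ j : Fin r, (T j false).2 i = true then some h.choose else none with hb
  have hline : ∀ c : Fin r, p c = patternLine b c := by
    intro c
    funext i
    simp only [patternLine, hb]
    by_cases h : ∃ j : Fin r, (T j false).2 i = true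
    · rw [dif_pos h]
      have hj := h.choose_spec
      by_cases hjc : h.choose = c
      · rw [hjc] at hj ⊢
        exact (hD4 c i hj)
      · have := hfib0 c h.choose hjc i
        rw [hj] at this
        exact of_decide_eq_true this.symm
    · rw [dif_neg h]
      by_contra hne
      exact h ⟨p c i, by rw [hfib0 c (p c i) hne i]; simp⟩
  have hpin : ∀ c : Fin r, p c istar = c := by
    intro c
    have h1 := (hacc c).2.2 c (htoQ_eq c)
    rw [htoQ_eq] at h1
    rw [hi1 c] at h1
    rw [hfib1 c istar] at h1
    exact of_decide_eq_true h1
  cases hbs : b istar with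
  | none =>
      exact hS ⟨b, ⟨istar, hbs⟩, fun q => by
        rw [← hline q]; exact Finset.mem_coe.2 (hp q)⟩
  | some j =>
      obtain ⟨c, hcj, -⟩ := exists_third hr j j
      have h1 := hpin c
      rw [hline c] at h1
      simp only [patternLine, hbs, Option.getD_some] at h1
      exact hcj h1.symm


-- every element of the repValue set is ≤ 1 (over question set QbarR r, r ≥ 3)
lemma repValue_le_one {r n : ℕ} (hr : 3 ≤ r) {A : Fin r → Type}
    (V : (Fin r → Bool) → (∀ j, A j) → Bool) :
    repValue n (QbarR r) V ≤ 1 := by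
  apply Real.sSup_le _ zero_le_one
  rintro x ⟨Sj, rfl⟩
  apply div_le_one_of_le₀
  · exact_mod_cast Finset.card_filter_le _ _
  · positivity

lemma rep_elem_le_one {r n : ℕ} {A : Fin r → Type}
    (V : (Fin r → Bool) → (∀ j, A j) → Bool) :
    ∀ x ∈ { x : ℝ | ∃ S : ∀ j : Fin r, (Fin n → Bool) → (Fin n → A j),
      x = (((Fintype.piFinset fun _ : Fin n => QbarR r).filter fun q =>
            ∀ i, V (q i) (fun j => S j (fun i' => q i' j) i) = true).card : ℝ) /
          ((Fintype.piFinset fun _ : Fin n => QbarR r).card : ℝ) }, x ≤ 1 := by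
  rintro x ⟨Sj, rfl⟩
  apply div_le_one_of_le₀
  · exact_mod_cast Finset.card_filter_le _ _
  · positivity

lemma gameValue_ne_one {r n : ℕ} (hr : 3 ≤ r) {S : Finset (Fin n → Fin r)}
    (hS : ¬ HasCombLine (↑S : Set (Fin n → Fin r))) :
    gameValue (QbarR r) (Ver S) ≠ 1 := by
  have hrR : (3 : ℝ) ≤ (r : ℝ) := by exact_mod_cast hr
  have hlt : gameValue (QbarR r) (Ver S) < 1 := by
    have hb : gameValue (QbarR r) (Ver S) ≤ ((r : ℝ) - 1) / r := by
      apply Real.sSup_le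
      · rintro x ⟨T, rfl⟩
        obtain ⟨q0, hq0, hrej⟩ := exists_reject hr hS T
        have hsub : (QbarR r).filter (fun q => Ver S q (fun j => T j (q j)) = true) ⊆
            (QbarR r).erase q0 := by
          intro q hq
          rw [Finset.mem_filter] at hq
          rw [Finset.mem_erase]
          refine ⟨fun h => ?_, hq.1⟩
          rw [h, hrej] at hq
          exact Bool.noConfusion hq.2
        have hcard := Finset.card_le_card hsub
        rw [Finset.card_erase_of_mem hq0, QbarR_card] at hcard
        rw [QbarR_card]
        rw [div_le_div_iff_of_pos_right (by linarith : (0:ℝ) < r)]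
        have hc1 : ((r - 1 : ℕ) : ℝ) = (r : ℝ) - 1 := by
          rw [Nat.cast_sub (by linarith : 1 ≤ r)]
          simp
        rw [← hc1]
        exact_mod_cast hcard
      · apply div_nonneg (by linarith) (by linarith)
    have : ((r : ℝ) - 1) / r < 1 := by
      rw [div_lt_one (by linarith)]
      linarith
    linarith
  exact ne_of_lt hlt

lemma mu_le_omegaQ {r n : ℕ} (hr : 3 ≤ r) (hn : 1 ≤ n) (S : Finset (Fin n → Fin r))
    (hS : ¬ HasCombLine (↑S : Set (Fin n → Fin r))) :
    (S.card : ℝ) / (r : ℝ) ^ n ≤ omegaQ (QbarR r) n := by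
  have step1 : (S.card : ℝ) / (r : ℝ) ^ n ≤ repValue n (QbarR r) (Ver S) := by
    apply le_csSup
    · exact ⟨1, rep_elem_le_one (Ver S)⟩
    · refine ⟨Str, ?_⟩
      rw [honest_filter hn S, Finset.card_image_of_injective _ Phi_inj, piFinset_card]
      push_cast
      ring
  have step2 : repValue n (QbarR r) (Ver S) ≤ omegaQ (QbarR r) n := by
    apply le_csSup
    · refine ⟨1, ?_⟩
      rintro x ⟨A, _, _, V, _, rfl⟩
      exact repValue_le_one hr V
    · exact ⟨fun _ => Fin n × (Fin n → Bool), fun _ => inferInstance,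
        fun _ => ⟨(⟨0, hn⟩, fun _ => false)⟩, Ver S, gameValue_ne_one hr hS, rfl⟩
  linarith

end DHJaux

/-- For `r ≥ 3` and `n ≥ 1`, `ω_r^DHJ(n) ≤ ω_{Q̄_r}(n)`. -/
theorem statement1 (r : ℕ) (hr : 3 ≤ r) (n : ℕ) (hn : 1 ≤ n) :
    omegaDHJ r n ≤ omegaQ (QbarR r) n := by
  have h0 : 0 ≤ omegaQ (QbarR r) n := by
    have hfree : ¬ HasCombLine (↑(∅ : Finset (Fin n → Fin r)) : Set (Fin n → Fin r)) := by
      rintro ⟨b, ⟨i, hi⟩, hq⟩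
      simpa using hq ⟨0, by omega⟩
    have := DHJaux.mu_le_omegaQ hr hn ∅ hfree
    simpa using this
  apply Real.sSup_le _ h0
  rintro x ⟨S, hS, rfl⟩
  exact DHJaux.mu_le_omegaQ hr hn S hS
end

section
/- Let r ≥ 3. The question set Q̄_r does not admit exponential parallel repetition: for every constant C < 1 there exists n ∈ ℕ with ω_{Q̄_r}(n) > C^n. -/
namespace Statement2Aux

open Finset

/-- Answer alphabet for the counterexample game: a claimed hot set together with a
claimed coordinate index. -/
abbrev Ans (n : ℕ) : Type := (Fin n → Bool) × Fin n

/-- Size of the claimed hot set. -/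
def ysz {n : ℕ} (y : Ans n) : ℕ := (Finset.univ.filter fun p => y.1 p = true).card

/-- The verifier of the counterexample game. -/
def Vg {r : ℕ} (n b : ℕ) (c₁ : Fin r) (q : Fin r → Bool) (a : Fin r → Ans n) : Bool :=
  decide ((∀ j j' : Fin r, q j = false → q j' = false → j ≠ j' →
              ∀ p, ¬((a j).1 p = true ∧ (a j').1 p = true)) ∧
          (∀ j j' : Fin r, q j = false → q j' = false → (a j).1 ((a j').2) = false) ∧
          (q c₁ = true →
            (∑ j ∈ Finset.univ.filter (fun j => q j = false), ysz (a j)) + b = n) ∧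
          (q c₁ = false → ysz (a c₁) = b))

lemma mem_QbarR {r : ℕ} {q : Fin r → Bool} :
    q ∈ QbarR r ↔ (Finset.univ.filter fun j => q j = true).card = 1 := by
  simp [QbarR]

lemma hot_filter {r : ℕ} (i : Fin r) :
    (Finset.univ.filter fun j => (decide (i = j) : Bool) = true) = {i} := by
  ext j
  simp only [Finset.mem_filter, Finset.mem_univ, true_and, decide_eq_true_eq,
    Finset.mem_singleton]
  exact ⟨fun h => h.symm, fun h => h.symm⟩

lemma hot_mem {r : ℕ} (i : Fin r) : (fun j => decide (i = j)) ∈ QbarR r := by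
  rw [mem_QbarR, hot_filter]
  simp

lemma card_QbarR (r : ℕ) : (QbarR r).card = r := by
  have himg : QbarR r = Finset.univ.image (fun i : Fin r => (fun j => decide (i = j))) := by
    ext q
    constructor
    · intro hq
      rw [mem_QbarR] at hq
      obtain ⟨i, hi⟩ := Finset.card_eq_one.mp hq
      refine Finset.mem_image.mpr ⟨i, Finset.mem_univ i, ?_⟩
      funext j
      by_cases hqj : q j = true
      · have hj : j ∈ ({i} : Finset (Fin r)) := by
          rw [← hi]
          exact Finset.mem_filter.mpr ⟨Finset.mem_univ j, hqj⟩
        rw [Finset.mem_singleton] at hj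
        subst hj
        simp [hqj]
      · have hj : j ∉ ({i} : Finset (Fin r)) := by
          rw [← hi]
          simp only [Finset.mem_filter, Finset.mem_univ, true_and]
          exact hqj
        rw [Finset.mem_singleton] at hj
        have hq' : q j = false := by
          cases hq'' : q j
          · rfl
          · exact absurd hq'' hqj
        rw [hq', decide_eq_false]
        exact fun hij => hj hij.symm
    · intro hq
      obtain ⟨i, _, rfl⟩ := Finset.mem_image.mp hq
      exact hot_mem i
  rw [himg, Finset.card_image_of_injective _ ?_, Finset.card_univ, Fintype.card_fin]
  intro i i' hii'
  have h : i' = i := by simpa using (congrFun hii' i).symm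
  exact h.symm

lemma honest_pass {r n : ℕ} (b : ℕ) (c₁ : Fin r) (h : Fin n → Fin r)
    (hb : (Finset.univ.filter fun i => h i = c₁).card = b) (i : Fin n) :
    Vg n b c₁ (fun j => decide (h i = j))
      (fun j => ((fun i' => decide (h i' = j)), i)) = true := by
  rw [Vg, decide_eq_true_eq]
  have hY : ∀ j : Fin r, ysz (((fun i' => decide (h i' = j)), i) : Ans n)
      = (Finset.univ.filter fun p => h p = j).card := by
    intro j
    unfold ysz
    congr 1
    ext p
    simp
  have htot : ∑ j : Fin r, (Finset.univ.filter fun p => h p = j).card = n := by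
    have := Finset.card_eq_sum_card_fiberwise
      (s := (Finset.univ : Finset (Fin n))) (t := (Finset.univ : Finset (Fin r)))
      (f := h) (fun x _ => Finset.mem_univ (h x))
    simpa using this.symm
  refine ⟨?_, ?_, ?_, ?_⟩
  · intro j j' _ _ hne p hp
    simp only [decide_eq_true_eq] at hp
    exact hne (hp.1.symm.trans hp.2)
  · intro j j' hj _
    exact hj
  · intro hc
    have hic : h i = c₁ := of_decide_eq_true hc
    have hfil : (Finset.univ.filter fun j : Fin r => (decide (h i = j) : Bool) = false)
        = Finset.univ.erase c₁ := by
      ext j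
      simp only [Finset.mem_filter, Finset.mem_univ, true_and, Finset.mem_erase, and_true,
        decide_eq_false_iff_not]
      constructor
      · intro hne hji
        exact hne (hji ▸ hic)
      · intro hne hij
        exact hne (hij.symm.trans hic)
    rw [show (Finset.univ.filter fun j : Fin r => (fun j => decide (h i = j)) j = false)
        = Finset.univ.erase c₁ from hfil]
    rw [Finset.sum_congr rfl (fun j _ => hY j)]
    have hadd := Finset.sum_erase_add Finset.univ
      (fun j : Fin r => (Finset.univ.filter fun p => h p = j).card) (Finset.mem_univ c₁)
    rw [hb, htot] at hadd
    exact hadd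
  · intro _
    rw [hY c₁]
    exact hb

lemma unsat {r n : ℕ} (b : ℕ) (c₀ c₁ c₂ : Fin r)
    (h01 : c₀ ≠ c₁) (h02 : c₀ ≠ c₂) (h12 : c₁ ≠ c₂)
    (S : ∀ _ : Fin r, Bool → Ans n) :
    ∃ q ∈ QbarR r, Vg n b c₁ q (fun j => S j (q j)) = false := by
  by_contra hcon
  push_neg at hcon
  have pass : ∀ i : Fin r, ((∀ j j' : Fin r, (decide (i = j) : Bool) = false →
        (decide (i = j') : Bool) = false → j ≠ j' →
        ∀ p, ¬((S j (decide (i = j))).1 p = true ∧ (S j' (decide (i = j'))).1 p = true)) ∧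
      (∀ j j' : Fin r, (decide (i = j) : Bool) = false → (decide (i = j') : Bool) = false →
        (S j (decide (i = j))).1 ((S j' (decide (i = j'))).2) = false) ∧
      ((decide (i = c₁) : Bool) = true →
        (∑ j ∈ Finset.univ.filter (fun j => (decide (i = j) : Bool) = false),
          ysz (S j (decide (i = j)))) + b = n) ∧
      ((decide (i = c₁) : Bool) = false → ysz (S c₁ (decide (i = c₁))) = b)) := by
    intro i
    have hmem := hot_mem (r := r) i
    have hcon' := hcon _ hmem
    have : Vg n b c₁ (fun j => decide (i = j)) (fun j => S j (decide (i = j))) = true := by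
      cases hV : Vg n b c₁ (fun j => decide (i = j)) (fun j => S j (decide (i = j)))
      · exact absurd hV hcon'
      · rfl
    rw [Vg, decide_eq_true_eq] at this
    exact this
  -- cold answers
  set w : Fin r → Ans n := fun j => S j false with hw
  have hfalse : ∀ i j : Fin r, i ≠ j → (decide (i = j) : Bool) = false := by
    intro i j hij
    exact decide_eq_false hij
  -- all claimed sets are pairwise disjoint
  have hdisj : ∀ j j' : Fin r, j ≠ j' → ∀ p, ¬((w j).1 p = true ∧ (w j').1 p = true) := by
    intro j j' hne p
    have hpick : ∃ i : Fin r, i ≠ j ∧ i ≠ j' ∧ (i = c₀ ∨ i = c₁ ∨ i = c₂) := by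
      by_cases h0j : c₀ = j
      · by_cases h1j' : c₁ = j'
        · exact ⟨c₂, fun hc => h02 (h0j.trans hc.symm), fun hc => h12 (h1j'.trans hc.symm),
            Or.inr (Or.inr rfl)⟩
        · by_cases h1j : c₁ = j
          · exact absurd (h0j.trans h1j.symm) h01
          · exact ⟨c₁, h1j, h1j', Or.inr (Or.inl rfl)⟩
      · by_cases h0j' : c₀ = j'
        · by_cases h1j : c₁ = j
          · exact ⟨c₂, fun hc => h12 (h1j.trans hc.symm), fun hc => h02 (h0j'.trans hc.symm),
              Or.inr (Or.inr rfl)⟩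
          · exact ⟨c₁, h1j, fun h1j' => h01 (h0j'.trans h1j'.symm), Or.inr (Or.inl rfl)⟩
        · exact ⟨c₀, h0j, h0j', Or.inl rfl⟩
    obtain ⟨i, hij, hij', _⟩ := hpick
    have hd := (pass i).1 j j' (hfalse i j hij) (hfalse i j' hij') hne p
    rw [hfalse i j hij, hfalse i j' hij'] at hd
    exact hd
  -- the common claimed position avoids all claimed sets
  have htnot : ∀ j : Fin r, (S j false).1 ((S c₀ false).2) = false := by
    intro j
    by_cases hj1 : j = c₁
    · have hc2j : c₂ ≠ j := fun hc => h12 ((hc.trans hj1).symm)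
      have hm := (pass c₂).2.1 j c₀ (hfalse c₂ j hc2j) (hfalse c₂ c₀ (Ne.symm h02))
      rw [hfalse c₂ j hc2j, hfalse c₂ c₀ (Ne.symm h02)] at hm
      exact hm
    · have hm := (pass c₁).2.1 j c₀ (hfalse c₁ j (fun hcj => hj1 hcj.symm))
        (hfalse c₁ c₀ (Ne.symm h01))
      rw [hfalse c₁ j (fun hcj => hj1 hcj.symm), hfalse c₁ c₀ (Ne.symm h01)] at hm
      exact hm
  -- the counting facts
  have hcnt1 := (pass c₁).2.2.1 (by simp)
  have hcnt2 := (pass c₂).2.2.2 (hfalse c₂ c₁ (Ne.symm h12))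
  rw [hfalse c₂ c₁ (Ne.symm h12)] at hcnt2
  have hfil : (Finset.univ.filter fun j : Fin r => (decide (c₁ = j) : Bool) = false)
      = Finset.univ.erase c₁ := by
    ext j
    simp only [Finset.mem_filter, Finset.mem_univ, true_and, Finset.mem_erase, and_true,
      decide_eq_false_iff_not]
    exact ⟨fun hne hj => hne hj.symm, fun hne hj => hne hj.symm⟩
  rw [hfil] at hcnt1
  have hsumeq : ∑ j ∈ Finset.univ.erase c₁, ysz (S j (decide (c₁ = j)))
      = ∑ j ∈ Finset.univ.erase c₁, ysz (S j false) := by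
    refine Finset.sum_congr rfl (fun j hj => ?_)
    rw [hfalse c₁ j (Ne.symm (Finset.mem_erase.mp hj).1)]
  rw [hsumeq] at hcnt1
  have htotY : ∑ j : Fin r, ysz (S j false) = n := by
    have hadd := Finset.sum_erase_add Finset.univ
      (fun j : Fin r => ysz (S j false)) (Finset.mem_univ c₁)
    omega
  -- disjointness of the claimed sets as finsets
  have hdisjF : ∀ j ∈ (Finset.univ : Finset (Fin r)), ∀ j' ∈ Finset.univ, j ≠ j' →
      Disjoint (Finset.univ.filter fun p => (S j false).1 p = true)
               (Finset.univ.filter fun p => (S j' false).1 p = true) := by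
    intro j _ j' _ hne
    rw [Finset.disjoint_left]
    intro p hp hp'
    rw [Finset.mem_filter] at hp hp'
    exact hdisj j j' hne p ⟨hp.2, hp'.2⟩
  have hcard := Finset.card_biUnion hdisjF
  have hsub : (Finset.univ.biUnion fun j : Fin r =>
      Finset.univ.filter fun p => (S j false).1 p = true)
      ⊆ Finset.univ.erase ((S c₀ false).2) := by
    refine Finset.biUnion_subset.mpr (fun j _ => ?_)
    rw [Finset.subset_erase]
    refine ⟨Finset.subset_univ _, fun hmem => ?_⟩
    rw [Finset.mem_filter, htnot j] at hmem
    exact absurd hmem.2 (by simp)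
  have hle := Finset.card_le_card hsub
  rw [hcard, Finset.card_erase_of_mem (Finset.mem_univ _), Finset.card_univ,
    Fintype.card_fin] at hle
  have htotY' : ∑ j : Fin r, (Finset.univ.filter fun p => (S j false).1 p = true).card = n := by
    simpa only [ysz] using htotY
  rw [htotY'] at hle
  have hn1 : 1 ≤ n := (S c₀ false).2.pos
  omega

lemma gameValue_ne_one {r n : ℕ} (b : ℕ) (c₀ c₁ c₂ : Fin r)
    (h01 : c₀ ≠ c₁) (h02 : c₀ ≠ c₂) (h12 : c₁ ≠ c₂) (hr : 1 ≤ r) :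
    gameValue (QbarR r) (Vg (r := r) n b c₁) ≠ 1 := by
  have hrpos : (0:ℝ) < r := by
    have : (1:ℝ) ≤ r := by exact_mod_cast hr
    linarith
  have hbound : ∀ x ∈ {x : ℝ | ∃ S : ∀ j : Fin r, Bool → Ans n,
      x = (((QbarR r).filter fun q => Vg n b c₁ q (fun j => S j (q j)) = true).card : ℝ) /
        ((QbarR r).card : ℝ)}, x ≤ ((r:ℝ) - 1)/r := by
    rintro x ⟨S, rfl⟩
    obtain ⟨q₀, hq₀, hfail⟩ := unsat b c₀ c₁ c₂ h01 h02 h12 S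
    have hsub : ((QbarR r).filter fun q => Vg n b c₁ q (fun j => S j (q j)) = true)
        ⊆ (QbarR r).erase q₀ := by
      intro q hq
      rw [Finset.mem_filter] at hq
      rw [Finset.mem_erase]
      refine ⟨fun hqq => ?_, hq.1⟩
      rw [hqq] at hq
      rw [hq.2] at hfail
      exact absurd hfail (by simp)
    have hcardle : (((QbarR r).filter fun q => Vg n b c₁ q (fun j => S j (q j)) = true).card)
        ≤ r - 1 := by
      have h := Finset.card_le_card hsub
      rwa [Finset.card_erase_of_mem hq₀, card_QbarR] at h
    rw [card_QbarR]
    have h1 : ((((QbarR r).filter fun q => Vg n b c₁ q (fun j => S j (q j)) = true).card) : ℝ)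
        ≤ (r:ℝ) - 1 := by
      have h2 := (Nat.cast_le (α := ℝ)).mpr hcardle
      rwa [Nat.cast_sub hr, Nat.cast_one] at h2
    have h3 : (0:ℝ) ≤ ((r:ℝ) - 1) := by
      have : (1:ℝ) ≤ r := by exact_mod_cast hr
      linarith
    rw [div_le_div_iff₀ hrpos hrpos]
    nlinarith
  have hle : gameValue (QbarR r) (Vg (r := r) n b c₁) ≤ ((r:ℝ)-1)/r := by
    unfold gameValue
    refine Real.sSup_le hbound ?_
    have h1r : (1:ℝ) ≤ r := by exact_mod_cast hr
    apply div_nonneg <;> linarith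
  have hlt : ((r:ℝ)-1)/r < 1 := by
    rw [div_lt_one hrpos]
    linarith
  exact ne_of_lt (lt_of_le_of_lt hle hlt)

lemma card_piQbar (r n : ℕ) :
    ((Fintype.piFinset fun _ : Fin n => QbarR r).card) = r ^ n := by
  rw [Fintype.card_piFinset]
  simp [card_QbarR]

/-- Number of hot-assignments whose count of `c₁`-hot coordinates equals `b`. -/
def fib {r : ℕ} (n : ℕ) (c₁ : Fin r) (b : ℕ) : ℕ :=
  (Finset.univ.filter fun h : Fin n → Fin r =>
    (Finset.univ.filter fun i => h i = c₁).card = b).card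

lemma rep_set_le_one {r n : ℕ} (hr : 1 ≤ r) {A : Fin r → Type}
    (V : (Fin r → Bool) → (∀ j, A j) → Bool) :
    ∀ x ∈ {x : ℝ | ∃ S : ∀ j, (Fin n → Bool) → (Fin n → A j),
      x = (((Fintype.piFinset fun _ : Fin n => QbarR r).filter fun q =>
            ∀ i, V (q i) (fun j => S j (fun i' => q i' j) i) = true).card : ℝ) /
          ((Fintype.piFinset fun _ : Fin n => QbarR r).card : ℝ)}, x ≤ 1 := by
  rintro x ⟨S, rfl⟩
  have hd : (0:ℝ) < ((Fintype.piFinset fun _ : Fin n => QbarR r).card : ℝ) := by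
    rw [card_piQbar]
    have : (0:ℕ) < r ^ n := pow_pos (by omega) n
    exact_mod_cast this
  rw [div_le_one hd]
  exact_mod_cast Finset.card_filter_le _ _

lemma rep_lb {r n : ℕ} (hr : 1 ≤ r) (b : ℕ) (c₁ : Fin r) :
    ((Finset.univ.filter fun h : Fin n → Fin r =>
        (Finset.univ.filter fun i => h i = c₁).card = b).card : ℝ) / ((r:ℝ) ^ n)
      ≤ repValue n (QbarR r) (Vg (r := r) n b c₁) := by
  classical
  set F := (Fintype.piFinset fun _ : Fin n => QbarR r).filter fun q =>
    ∀ i, Vg (r := r) n b c₁ (q i)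
      (fun j => (fun (x : Fin n → Bool) => fun i0 => ((x, i0) : Ans n)) (fun i' => q i' j) i)
      = true with hF
  have hmem : ((F.card : ℝ) / ((Fintype.piFinset fun _ : Fin n => QbarR r).card : ℝ))
      ∈ {x : ℝ | ∃ S : ∀ _ : Fin r, (Fin n → Bool) → (Fin n → Ans n),
      x = (((Fintype.piFinset fun _ : Fin n => QbarR r).filter fun q =>
            ∀ i, Vg (r := r) n b c₁ (q i) (fun j => S j (fun i' => q i' j) i) = true).card : ℝ) /
          ((Fintype.piFinset fun _ : Fin n => QbarR r).card : ℝ)} := by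
    exact ⟨fun _ => fun x => fun i0 => (x, i0), rfl⟩
  have hbdd : BddAbove {x : ℝ | ∃ S : ∀ _ : Fin r, (Fin n → Bool) → (Fin n → Ans n),
      x = (((Fintype.piFinset fun _ : Fin n => QbarR r).filter fun q =>
            ∀ i, Vg (r := r) n b c₁ (q i) (fun j => S j (fun i' => q i' j) i) = true).card : ℝ) /
          ((Fintype.piFinset fun _ : Fin n => QbarR r).card : ℝ)} :=
    ⟨1, fun x hx => rep_set_le_one hr (Vg (r := r) n b c₁) x hx⟩
  have hsup : ((F.card : ℝ) / ((Fintype.piFinset fun _ : Fin n => QbarR r).card : ℝ))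
      ≤ repValue n (QbarR r) (Vg (r := r) n b c₁) := by
    unfold repValue
    exact le_csSup hbdd hmem
  refine le_trans ?_ hsup
  rw [card_piQbar]
  have hpush : ((r:ℕ):ℝ) ^ n = (((r ^ n : ℕ)):ℝ) := by push_cast; ring
  rw [hpush]
  have hd : (0:ℝ) < ((r ^ n : ℕ) : ℝ) := by
    have : (0:ℕ) < r ^ n := pow_pos (by omega) n
    exact_mod_cast this
  have hinj : (Finset.univ.filter fun h : Fin n → Fin r =>
      (Finset.univ.filter fun i => h i = c₁).card = b).card ≤ F.card := by
    apply Finset.card_le_card_of_injOn (fun h => fun i => fun j => decide (h i = j))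
    · intro h hh
      rw [Finset.mem_coe, Finset.mem_filter] at hh
      rw [Finset.mem_coe, hF, Finset.mem_filter]
      constructor
      · rw [Fintype.mem_piFinset]
        intro i
        exact hot_mem (h i)
      · intro i
        exact honest_pass b c₁ h hh.2 i
    · intro h _ h' _ heq
      funext i
      have hce : (decide (h i = h i) : Bool) = decide (h' i = h i) :=
        congrFun (congrFun heq i) (h i)
      have h2 : (decide (h i = h i) : Bool) = true := decide_eq_true rfl
      rw [h2] at hce
      exact (of_decide_eq_true hce.symm).symm
  exact (div_le_div_iff_of_pos_right hd).mpr (by exact_mod_cast hinj)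

lemma omega_ge {r : ℕ} (hr : 3 ≤ r) (n : ℕ) (hn : 1 ≤ n) :
    1 / ((n:ℝ) + 1) ≤ omegaQ (QbarR r) n := by
  classical
  obtain ⟨c₀, c₁, c₂, h01, h02, h12⟩ :
      ∃ c₀ c₁ c₂ : Fin r, c₀ ≠ c₁ ∧ c₀ ≠ c₂ ∧ c₁ ≠ c₂ := by
    refine ⟨⟨0, by omega⟩, ⟨1, by omega⟩, ⟨2, by omega⟩, ?_, ?_, ?_⟩ <;>
      simp [Fin.ext_iff]
  -- pigeonhole: pick a popular fiber b
  obtain ⟨b, hble⟩ : ∃ b, r ^ n ≤ (n + 1) * fib n c₁ b := by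
    have hsum : ∑ b ∈ Finset.range (n + 1), fib n c₁ b = r ^ n := by
      have hmaps : ∀ h ∈ (Finset.univ : Finset (Fin n → Fin r)),
          (Finset.univ.filter fun i => h i = c₁).card ∈ Finset.range (n + 1) := by
        intro h _
        rw [Finset.mem_range]
        have h2 := Finset.card_filter_le (Finset.univ : Finset (Fin n)) (fun i => h i = c₁)
        rw [Finset.card_univ, Fintype.card_fin] at h2
        omega
      have hcardfun : (Finset.univ : Finset (Fin n → Fin r)).card = r ^ n := by
        rw [Finset.card_univ, Fintype.card_fun, Fintype.card_fin, Fintype.card_fin]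
      have hfib := Finset.card_eq_sum_card_fiberwise hmaps
      have hsum' : ∑ b ∈ Finset.range (n + 1), fib n c₁ b
          = ∑ b ∈ Finset.range (n + 1), ((Finset.univ : Finset (Fin n → Fin r)).filter
              fun h => (Finset.univ.filter fun i => h i = c₁).card = b).card :=
        Finset.sum_congr rfl (fun b _ => rfl)
      rw [hsum', ← hfib, hcardfun]
    by_contra hno
    push_neg at hno
    have hlt : ∑ b ∈ Finset.range (n + 1), ((n + 1) * fib n c₁ b)
        < ∑ _b ∈ Finset.range (n + 1), r ^ n :=
      Finset.sum_lt_sum_of_nonempty ⟨0, Finset.mem_range.mpr (Nat.succ_pos n)⟩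
        (fun b _ => hno b)
    rw [← Finset.mul_sum, hsum, Finset.sum_const, Finset.card_range, smul_eq_mul] at hlt
    exact lt_irrefl _ hlt
  -- chain of inequalities
  have h1 : (1:ℝ) / ((n:ℝ) + 1) ≤ ((fib n c₁ b : ℕ) : ℝ) / ((r:ℝ) ^ n) := by
    have hr0 : (0:ℝ) < (r:ℝ) ^ n := by
      have : (0:ℝ) < (r:ℝ) := by exact_mod_cast (by omega : 0 < r)
      positivity
    rw [div_le_div_iff₀ (by positivity) hr0]
    have hc : ((r:ℕ):ℝ) ^ n ≤ ((n:ℝ) + 1) * ((fib n c₁ b : ℕ) : ℝ) := by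
      have hcast := (Nat.cast_le (α := ℝ)).mpr hble
      push_cast at hcast
      convert hcast using 2 <;> push_cast <;> ring
    nlinarith [hc]
  have h2 : ((fib n c₁ b : ℕ) : ℝ) / ((r:ℝ) ^ n)
      ≤ repValue n (QbarR r) (Vg (r := r) n b c₁) :=
    rep_lb (r := r) (n := n) (by omega) b c₁
  have hmem : repValue n (QbarR r) (Vg (r := r) n b c₁) ∈
      {x : ℝ | ∃ (A : Fin r → Type) (_ : ∀ j, Fintype (A j)) (_ : ∀ j, Nonempty (A j))
        (V : (Fin r → Bool) → (∀ j, A j) → Bool),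
          gameValue (QbarR r) V ≠ 1 ∧ x = repValue n (QbarR r) V} := by
    refine ⟨fun _ => Ans n, fun _ => inferInstance,
      fun _ => ⟨((fun _ => false), ⟨0, by omega⟩)⟩, Vg (r := r) n b c₁, ?_, rfl⟩
    exact gameValue_ne_one b c₀ c₁ c₂ h01 h02 h12 (by omega)
  have hbdd : BddAbove {x : ℝ | ∃ (A : Fin r → Type) (_ : ∀ j, Fintype (A j))
      (_ : ∀ j, Nonempty (A j)) (V : (Fin r → Bool) → (∀ j, A j) → Bool),
        gameValue (QbarR r) V ≠ 1 ∧ x = repValue n (QbarR r) V} := by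
    refine ⟨1, ?_⟩
    rintro y ⟨A, _, _, V, _, rfl⟩
    unfold repValue
    exact Real.sSup_le (rep_set_le_one (by omega) V) zero_le_one
  have h3 : repValue n (QbarR r) (Vg (r := r) n b c₁) ≤ omegaQ (QbarR r) n := by
    unfold omegaQ
    exact le_csSup hbdd hmem
  calc 1 / ((n:ℝ) + 1)
      ≤ ((fib n c₁ b : ℕ) : ℝ) / ((r:ℝ) ^ n) := h1
    _ ≤ repValue n (QbarR r) (Vg (r := r) n b c₁) := h2
    _ ≤ omegaQ (QbarR r) n := h3

end Statement2Aux

/-- For `r ≥ 3`, the question set `Q̄_r` does not admit exponential parallel repetition: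
for every constant `C < 1` there exists `n` with `ω_{Q̄_r}(n) > Cⁿ`. -/
theorem statement2 (r : ℕ) (hr : 3 ≤ r) (C : ℝ) (hC : C < 1) :
    ∃ n : ℕ, C ^ n < omegaQ (QbarR r) n := by
  rcases le_or_gt C 0 with hC0 | hC0
  · refine ⟨1, ?_⟩
    have h := Statement2Aux.omega_ge hr 1 le_rfl
    have h2 : (1:ℝ) / ((1:ℕ) + 1 : ℝ) = 1 / 2 := by norm_num
    calc C ^ 1 = C := pow_one C
      _ ≤ 0 := hC0
      _ < 1 / ((1:ℕ) + 1 : ℝ) := by norm_num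
      _ ≤ omegaQ (QbarR r) 1 := h
  · have hnorm : ‖C‖ < 1 := by
      rw [Real.norm_eq_abs, abs_of_pos hC0]
      exact hC
    have ht1 : Filter.Tendsto (fun n : ℕ => (n:ℝ) ^ 1 * C ^ n) Filter.atTop (nhds 0) :=
      (summable_pow_mul_geometric_of_norm_lt_one 1 hnorm).tendsto_atTop_zero
    have ht2 : Filter.Tendsto (fun n : ℕ => C ^ n) Filter.atTop (nhds 0) :=
      tendsto_pow_atTop_nhds_zero_of_lt_one hC0.le hC
    have ht : Filter.Tendsto (fun n : ℕ => ((n:ℝ) + 1) * C ^ n) Filter.atTop (nhds 0) := by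
      have h := ht1.add ht2
      simp only [pow_one] at h
      convert h using 2 with m
      · ring
      · norm_num
    have hev : ∀ᶠ m : ℕ in Filter.atTop, ((m:ℝ) + 1) * C ^ m < 1 :=
      ht.eventually_lt_const one_pos
    obtain ⟨n, hlt, hn1⟩ := (hev.and (Filter.eventually_ge_atTop 1)).exists
    refine ⟨n, lt_of_lt_of_le ?_ (Statement2Aux.omega_ge hr n hn1)⟩
    rw [lt_div_iff₀ (by positivity)]
    calc C ^ n * ((n:ℝ) + 1) = ((n:ℝ) + 1) * C ^ n := by ring
      _ < 1 := hlt
end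

section
/- Let Q̄ be an r-prover question set, let 𝒬 be a probability distribution with support Q̄, let ε := min_{q̄ ∈ Q̄} 𝒬(q̄) and α := ε·|Q̄|. Suppose f : ℕ_{>0} → [0,1] is non-increasing and satisfies val(H^m) ≤ f(m) for every m ≥ 1 and every non-trivial game H with question set Q̄ (uniform question distribution). Then for every game G with question set Q̄ whose questions are sampled according to 𝒬 and which is non-trivial, and every n ≥ 1, val(G^n) ≤ exp(−α²n/2) + f(⌈αn/2⌉). -/
/-- The value of a game whose question tuple is sampled according to the
distribution `Qd` (supported on `Qbar`): maximum over strategies of the total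
probability mass of accepted question tuples. -/
noncomputable def distValue {r : ℕ} {Q A : Fin r → Type}
    (Qbar : Finset (∀ j, Q j)) (Qd : (∀ j, Q j) → ℝ)
    (V : (∀ j, Q j) → (∀ j, A j) → Bool) : ℝ :=
  sSup { x : ℝ | ∃ S : ∀ j, Q j → A j,
    x = ∑ q ∈ Qbar.filter (fun q => V q (fun j => S j (q j)) = true), Qd q }

/-- The value of the `n`-fold parallel repetition of a game whose `n` question tuples
are sampled i.i.d. according to the distribution `Qd`. -/
noncomputable def distRepValue {r : ℕ} {Q A : Fin r → Type} [∀ j, DecidableEq (Q j)]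
    (n : ℕ) (Qbar : Finset (∀ j, Q j)) (Qd : (∀ j, Q j) → ℝ)
    (V : (∀ j, Q j) → (∀ j, A j) → Bool) : ℝ :=
  sSup { x : ℝ | ∃ S : ∀ j, (Fin n → Q j) → (Fin n → A j),
    x = ∑ q ∈ (Fintype.piFinset fun _ : Fin n => Qbar).filter
          (fun q => ∀ i, V (q i) (fun j => S j (fun i' => q i' j) i) = true),
        ∏ i, Qd (q i) }

theorem sum_powerset_pow (a b : ℝ) (n : ℕ) :
    ∑ T ∈ (Finset.univ : Finset (Fin n)).powerset, a ^ T.card * b ^ (n - T.card) = (a + b) ^ n := by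
  have h := Finset.prod_add (fun _ : Fin n => a) (fun _ => b) Finset.univ
  simp only [Finset.prod_const, Finset.card_univ, Fintype.card_fin] at h
  rw [h]
  apply Finset.sum_congr rfl
  intro T hT
  rw [Finset.card_sdiff_of_subset (Finset.mem_powerset.mp hT), Finset.card_univ, Fintype.card_fin]

theorem pinsker_half (β a : ℝ) (hβ : 0 < β) (hba : β ≤ a) (ha : a < 1) :
    2 * (a - β) ^ 2 ≤
      β * (Real.log β - Real.log a) + (1 - β) * (Real.log (1 - β) - Real.log (1 - a)) := by
  set φ : ℝ → ℝ := fun x =>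
    β * (Real.log β - Real.log x) + (1 - β) * (Real.log (1 - β) - Real.log (1 - x))
      - 2 * (x - β) ^ 2 with hφ
  have hβ1 : β < 1 := lt_of_le_of_lt hba ha
  have hder : ∀ x ∈ Set.Icc β a, HasDerivAt φ
      (-(β / x) + (1 - β) / (1 - x) - 4 * (x - β)) x := by
    intro x hx
    have hx0 : 0 < x := lt_of_lt_of_le hβ hx.1
    have hx1 : x < 1 := lt_of_le_of_lt hx.2 ha
    have h1 : HasDerivAt (fun x : ℝ => Real.log x) (x⁻¹) x := Real.hasDerivAt_log (ne_of_gt hx0)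
    have h2 : HasDerivAt (fun x : ℝ => 1 - x) (-1) x := by
      simpa using (hasDerivAt_id x).const_sub 1
    have h3 : HasDerivAt (fun x : ℝ => Real.log (1 - x)) (-(1 / (1 - x))) x := by
      have := (Real.hasDerivAt_log (by linarith : (1:ℝ) - x ≠ 0)).comp x h2
      simp at this ⊢; exact this
    have h4 : HasDerivAt (fun x : ℝ => (x - β) ^ 2) (2 * (x - β)) x := by
      have := ((hasDerivAt_id x).sub_const β).pow 2
      simp at this ⊢; exact this
    have := (((h1.const_sub (Real.log β)).const_mul β).add
      ((h3.const_sub (Real.log (1 - β))).const_mul (1 - β))).sub (h4.const_mul 2)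
    exact this.congr_deriv (by ring)
  have hmono : MonotoneOn φ (Set.Icc β a) := by
    rcases eq_or_lt_of_le hba with h | hba'
    · subst h; intro x hx y hy hxy
      have : x = β := le_antisymm hx.2 hx.1
      have : y = β := le_antisymm hy.2 hy.1
      simp_all
    · apply monotoneOn_of_deriv_nonneg (convex_Icc β a)
      · exact fun x hx => ((hder x hx).continuousAt).continuousWithinAt
      · intro x hx
        rw [interior_Icc] at hx
        exact ((hder x (Set.mem_Icc_of_Ioo hx)).differentiableAt).differentiableWithinAt
      · intro x hx
        rw [interior_Icc] at hx
        have hx0 : 0 < x := lt_of_lt_of_le hβ hx.1.le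
        have hx1 : x < 1 := lt_of_lt_of_le hx.2 ha.le
        rw [(hder x (Set.mem_Icc_of_Ioo hx)).deriv]
        have hd : (0:ℝ) < x * (1 - x) := by nlinarith
        have key : -(β / x) + (1 - β) / (1 - x) - 4 * (x - β)
            = (x - β) * (1 - 2 * x) ^ 2 / (x * (1 - x)) := by
          rw [eq_div_iff (ne_of_gt hd)]
          have h2 : x ≠ 0 := ne_of_gt hx0
          have h1 : (1 : ℝ) - x ≠ 0 := by linarith
          field_simp
          ring
        rw [key]
        apply div_nonneg _ hd.le
        exact mul_nonneg (by linarith [hx.1.le]) (sq_nonneg _)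
  have h0 : φ β = 0 := by
    simp [hφ]
  have := hmono (Set.left_mem_Icc.mpr hba) (Set.right_mem_Icc.mpr hba) hba
  rw [h0] at this
  simp only [hφ] at this
  linarith

theorem keyExp (α : ℝ) (h0 : 0 < α) (h1 : α < 1) :
    ((1 - α) / (2 - α)) ^ (-(α / 2)) * (α * ((1 - α) / (2 - α)) + (1 - α))
      ≤ Real.exp (-(α ^ 2 / 2)) := by
  set x : ℝ := (1 - α) / (2 - α) with hx
  have h2 : (0:ℝ) < 2 - α := by linarith
  have h1' : (0:ℝ) < 1 - α := by linarith
  have hx0 : 0 < x := div_pos h1' h2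
  have hmix : α * x + (1 - α) = 2 * (1 - α) / (2 - α) := by
    rw [hx]
    field_simp
    ring
  have hmixpos : 0 < α * x + (1 - α) := by positivity
  have hlhs : ((1 - α) / (2 - α)) ^ (-(α / 2)) * (α * ((1 - α) / (2 - α)) + (1 - α))
      = Real.exp (Real.log x * (-(α / 2)) + Real.log (α * x + (1 - α))) := by
    rw [Real.exp_add, Real.exp_log hmixpos, ← Real.rpow_def_of_pos hx0]
  rw [hlhs, Real.exp_le_exp]
  -- reduce to Pinsker with β = α/2, a = α
  have hp := pinsker_half (α / 2) α (by linarith) (by linarith) h1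
  have e1 : Real.log (α / 2) = Real.log α - Real.log 2 := by
    rw [Real.log_div (ne_of_gt h0) (by norm_num)]
  have e2 : Real.log (1 - α / 2) = Real.log (2 - α) - Real.log 2 := by
    have : (1 : ℝ) - α / 2 = (2 - α) / 2 := by ring
    rw [this, Real.log_div (ne_of_gt h2) (by norm_num)]
  have e3 : Real.log x = Real.log (1 - α) - Real.log (2 - α) := by
    rw [hx, Real.log_div (ne_of_gt h1') (ne_of_gt h2)]
  have e4 : Real.log (α * x + (1 - α)) = Real.log 2 + Real.log (1 - α) - Real.log (2 - α) := by
    rw [hmix, Real.log_div (by positivity) (ne_of_gt h2), Real.log_mul (by norm_num) (ne_of_gt h1')]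
  rw [e3, e4]
  rw [e1, e2] at hp
  nlinarith [hp]

theorem tail_bound (α : ℝ) (h0 : 0 < α) (h1 : α < 1) (n : ℕ) :
    ∑ T ∈ (Finset.univ : Finset (Fin n)).powerset.filter
        (fun T => (T.card : ℝ) < α * n / 2),
      α ^ T.card * (1 - α) ^ (n - T.card) ≤ Real.exp (-(α ^ 2 * n) / 2) := by
  set x : ℝ := (1 - α) / (2 - α) with hxdef
  have h2 : (0:ℝ) < 2 - α := by linarith
  have h1' : (0:ℝ) < 1 - α := by linarith
  have hx0 : 0 < x := div_pos h1' h2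
  have hx1 : x ≤ 1 := by
    rw [hxdef, div_le_one h2]; linarith
  have step1 : ∑ T ∈ (Finset.univ : Finset (Fin n)).powerset.filter
        (fun T => (T.card : ℝ) < α * n / 2),
      α ^ T.card * (1 - α) ^ (n - T.card)
      ≤ ∑ T ∈ (Finset.univ : Finset (Fin n)).powerset,
        x ^ ((T.card : ℝ) - α * n / 2) * (α ^ T.card * (1 - α) ^ (n - T.card)) := by
    apply le_trans (Finset.sum_le_sum ?_)
    · apply Finset.sum_le_sum_of_subset_of_nonneg (Finset.filter_subset _ _)
      intro T _ _
      have := Real.rpow_nonneg hx0.le ((T.card : ℝ) - α * n / 2)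
      positivity
    · intro T hT
      rw [Finset.mem_filter] at hT
      have hle : 1 ≤ x ^ ((T.card : ℝ) - α * n / 2) := by
        apply Real.one_le_rpow_of_pos_of_le_one_of_nonpos hx0 hx1
        linarith [hT.2]
      nlinarith [pow_nonneg h0.le T.card, pow_nonneg h1'.le (n - T.card),
        mul_nonneg (pow_nonneg h0.le T.card) (pow_nonneg h1'.le (n - T.card))]
  refine le_trans step1 ?_
  have step2 : ∑ T ∈ (Finset.univ : Finset (Fin n)).powerset,
        x ^ ((T.card : ℝ) - α * n / 2) * (α ^ T.card * (1 - α) ^ (n - T.card))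
      = x ^ (-(α * n / 2) : ℝ) * ((α * x + (1 - α)) ^ n) := by
    rw [← sum_powerset_pow (α * x) (1 - α) n, Finset.mul_sum]
    apply Finset.sum_congr rfl
    intro T _
    rw [sub_eq_add_neg, Real.rpow_add hx0, Real.rpow_natCast, mul_pow]
    ring
  rw [step2]
  have step3 : x ^ (-(α * n / 2) : ℝ) = (x ^ (-(α / 2) : ℝ)) ^ n := by
    rw [← Real.rpow_natCast (x ^ (-(α / 2) : ℝ)) n, ← Real.rpow_mul hx0.le]
    congr 1
    ring
  rw [step3, ← mul_pow]
  have hbase : 0 ≤ x ^ (-(α / 2) : ℝ) * (α * x + (1 - α)) := by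
    have := Real.rpow_nonneg hx0.le (-(α / 2))
    nlinarith [mul_pos h0 hx0]
  calc (x ^ (-(α / 2) : ℝ) * (α * x + (1 - α))) ^ n
      ≤ Real.exp (-(α ^ 2 / 2)) ^ n := by
        apply pow_le_pow_left₀ hbase (keyExp α h0 h1)
    _ = Real.exp (-(α ^ 2 * n) / 2) := by
        rw [← Real.exp_nat_mul]
        congr 1
        push_cast
        ring

theorem repValue_bddAbove {r : ℕ} {Q A : Fin r → Type} [∀ j, DecidableEq (Q j)]
    (n : ℕ) (Qbar : Finset (∀ j, Q j)) (V : (∀ j, Q j) → (∀ j, A j) → Bool) :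
    ∀ x ∈ { x : ℝ | ∃ S : ∀ j, (Fin n → Q j) → (Fin n → A j),
    x = (((Fintype.piFinset fun _ : Fin n => Qbar).filter fun q =>
          ∀ i, V (q i) (fun j => S j (fun i' => q i' j) i) = true).card : ℝ) /
        ((Fintype.piFinset fun _ : Fin n => Qbar).card : ℝ) }, x ≤ 1 := by
  rintro x ⟨S, rfl⟩
  apply div_le_one_of_le₀
  · exact_mod_cast Nat.cast_le.mpr (Finset.card_le_card (Finset.filter_subset _ _))
  · positivity

theorem le_repValue {r : ℕ} {Q A : Fin r → Type} [∀ j, DecidableEq (Q j)]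
    (n : ℕ) (Qbar : Finset (∀ j, Q j)) (V : (∀ j, Q j) → (∀ j, A j) → Bool)
    (S : ∀ j, (Fin n → Q j) → (Fin n → A j)) :
    (((Fintype.piFinset fun _ : Fin n => Qbar).filter fun q =>
          ∀ i, V (q i) (fun j => S j (fun i' => q i' j) i) = true).card : ℝ) /
        ((Fintype.piFinset fun _ : Fin n => Qbar).card : ℝ) ≤ repValue n Qbar V :=
  le_csSup ⟨1, repValue_bddAbove n Qbar V⟩ ⟨S, rfl⟩

theorem repValue_le_one {r : ℕ} {Q A : Fin r → Type} [∀ j, DecidableEq (Q j)]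
    (n : ℕ) (Qbar : Finset (∀ j, Q j)) (V : (∀ j, Q j) → (∀ j, A j) → Bool) :
    repValue n Qbar V ≤ 1 :=
  Real.sSup_le (repValue_bddAbove n Qbar V) zero_le_one

theorem gameValue_ne_one {r : ℕ} {Q A : Fin r → Type} [∀ j, Fintype (Q j)]
    [∀ j, Fintype (A j)] [∀ j, Nonempty (A j)]
    (Qbar : Finset (∀ j, Q j)) (hne : Qbar.Nonempty)
    (Qd : (∀ j, Q j) → ℝ) (hpos : ∀ q ∈ Qbar, 0 < Qd q) (hsum : ∑ q ∈ Qbar, Qd q = 1)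
    (V : (∀ j, Q j) → (∀ j, A j) → Bool)
    (hnt : distValue Qbar Qd V ≠ 1) : gameValue Qbar V ≠ 1 := by
  intro hgv
  apply hnt
  -- the gameValue sup is attained since the strategy space is finite
  have hfin : ({ x : ℝ | ∃ S : ∀ j, Q j → A j,
      x = ((Qbar.filter fun q => V q (fun j => S j (q j)) = true).card : ℝ) / (Qbar.card : ℝ) }).Finite := by
    have : { x : ℝ | ∃ S : ∀ j, Q j → A j,
        x = ((Qbar.filter fun q => V q (fun j => S j (q j)) = true).card : ℝ) / (Qbar.card : ℝ) }
        = Set.range (fun S : ∀ j, Q j → A j =>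
          ((Qbar.filter fun q => V q (fun j => S j (q j)) = true).card : ℝ) / (Qbar.card : ℝ)) := by
      ext x
      constructor
      · rintro ⟨S, rfl⟩; exact ⟨S, rfl⟩
      · rintro ⟨S, rfl⟩; exact ⟨S, rfl⟩
    rw [this]
    exact Set.finite_range _
  have hsne : ({ x : ℝ | ∃ S : ∀ j, Q j → A j,
      x = ((Qbar.filter fun q => V q (fun j => S j (q j)) = true).card : ℝ) / (Qbar.card : ℝ) }).Nonempty := by
    refine ⟨_, ⟨fun j _ => Classical.arbitrary (A j), rfl⟩⟩
  have hmem := Set.Nonempty.csSup_mem hsne hfin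
  rw [show sSup _ = gameValue Qbar V from rfl, hgv] at hmem
  obtain ⟨S, hS⟩ := hmem
  have hcard : (0:ℝ) < (Qbar.card : ℝ) := by
    exact_mod_cast Finset.card_pos.mpr hne
  have hfull : (Qbar.filter fun q => V q (fun j => S j (q j)) = true) = Qbar := by
    apply Finset.eq_of_subset_of_card_le (Finset.filter_subset _ _)
    have := (div_eq_one_iff_eq (ne_of_gt hcard)).mp hS.symm
    exact_mod_cast le_of_eq this.symm
  -- so this strategy wins everywhere; its dist value is 1
  have h1mem : (1:ℝ) ∈ { x : ℝ | ∃ S : ∀ j, Q j → A j,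
      x = ∑ q ∈ Qbar.filter (fun q => V q (fun j => S j (q j)) = true), Qd q } := by
    exact ⟨S, by rw [hfull, hsum]⟩
  have hle1 : ∀ x ∈ { x : ℝ | ∃ S : ∀ j, Q j → A j,
      x = ∑ q ∈ Qbar.filter (fun q => V q (fun j => S j (q j)) = true), Qd q }, x ≤ 1 := by
    rintro x ⟨S', rfl⟩
    rw [← hsum]
    apply Finset.sum_le_sum_of_subset_of_nonneg (Finset.filter_subset _ _)
    intro q hq _
    exact (hpos q hq).le
  have hub : distValue Qbar Qd V ≤ 1 := Real.sSup_le hle1 zero_le_one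
  have hlb : (1:ℝ) ≤ distValue Qbar Qd V := le_csSup ⟨1, hle1⟩ h1mem
  linarith

set_option maxHeartbeats 1000000 in
theorem inner_bound {r n : ℕ} {Q A : Fin r → Type} [∀ j, Fintype (Q j)] [∀ j, DecidableEq (Q j)]
    (Qbar : Finset (∀ j, Q j)) (hne : Qbar.Nonempty)
    (V : (∀ j, Q j) → (∀ j, A j) → Bool)
    (g : (∀ j, Q j) → ℝ) (hg : ∀ q ∈ Qbar, 0 ≤ g q)
    (S : ∀ j, (Fin n → Q j) → (Fin n → A j))
    (T : Finset (Fin n)) :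
    ∑ q ∈ (Fintype.piFinset fun _ : Fin n => Qbar).filter
        (fun q => ∀ i, V (q i) (fun j => S j (fun i' => q i' j) i) = true),
      ∏ i ∈ Finset.univ \ T, g (q i)
    ≤ (∑ q ∈ Qbar, g q) ^ (n - T.card) *
        ((Qbar.card : ℝ) ^ T.card * repValue T.card Qbar V) := by
  classical
  obtain ⟨d, hd⟩ := hne
  set k := T.card with hk
  set e : Fin k ≃o {x // x ∈ T} := T.orderIsoOfFin rfl with he
  -- merge of outside and inside assignments
  set merge : (Fin n → ∀ j, Q j) → (Fin k → ∀ j, Q j) → (Fin n → ∀ j, Q j) :=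
    fun w v i j => if h : i ∈ T then v (e.symm ⟨i, h⟩) j else w i j with hmerge
  set W : Finset (Fin n → ∀ j, Q j) :=
    Fintype.piFinset (fun i => if i ∈ T then ({d} : Finset (∀ j, Q j)) else Qbar) with hW
  set Vk : Finset (Fin k → ∀ j, Q j) := Fintype.piFinset (fun _ => Qbar) with hVk
  set F : (Fin n → ∀ j, Q j) → ℝ := fun q =>
    if (∀ i, V (q i) (fun j => S j (fun i' => q i' j) i) = true) then
      ∏ i ∈ Finset.univ \ T, g (q i) else 0 with hF
  -- Step 1: rewrite the filtered sum via F
  rw [Finset.sum_filter]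
  -- Step 2: reindex by (w, v) pairs
  have hsplit : ∑ q ∈ (Fintype.piFinset fun _ : Fin n => Qbar), F q
      = ∑ p ∈ W ×ˢ Vk, F (merge p.1 p.2) := by
    apply Finset.sum_nbij' (i := fun q => ((fun i => if i ∈ T then d else q i),
        (fun l => q (e l).1))) (j := fun p => merge p.1 p.2)
    · intro q hq
      rw [Finset.mem_product]
      constructor
      · rw [hW, Fintype.mem_piFinset]
        intro i
        by_cases h : i ∈ T <;> simp [h, Fintype.mem_piFinset.mp hq i]
      · rw [hVk, Fintype.mem_piFinset]
        intro l
        exact Fintype.mem_piFinset.mp hq _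
    · intro p hp
      rw [Finset.mem_product] at hp
      rw [Fintype.mem_piFinset]
      intro i
      by_cases h : i ∈ T
      · have : merge p.1 p.2 i = p.2 (e.symm ⟨i, h⟩) := by
          funext j; simp [hmerge, h]
        rw [this]
        exact Fintype.mem_piFinset.mp hp.2 _
      · have : merge p.1 p.2 i = p.1 i := by
          funext j; simp [hmerge, h]
        rw [this]
        have := Fintype.mem_piFinset.mp hp.1 i
        simpa [h] using this
    · -- left inv : j (i q) = q
      intro q hq
      funext i j
      by_cases h : i ∈ T
      · simp only [hmerge, dif_pos h]
        congr 1
        have : (⟨i, h⟩ : {x // x ∈ T}) = e (e.symm ⟨i, h⟩) := (e.apply_symm_apply _).symm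
        rw [← this]
      · simp [hmerge, h]
    · -- right inv : i (j p) = p
      intro p hp
      rw [Finset.mem_product] at hp
      apply Prod.ext
      · funext i j
        by_cases h : i ∈ T
        · simp only [if_pos h]
          have := Fintype.mem_piFinset.mp hp.1 i
          rw [if_pos h, Finset.mem_singleton] at this
          rw [this]
        · simp only [if_neg h, hmerge, dif_neg h]
      · funext l j
        simp only [hmerge, dif_pos (e l).2]
        rw [e.symm_apply_apply]
    · intro q hq
      congr 1
      funext i j
      by_cases h : i ∈ T
      · simp only [hmerge, dif_pos h]
        congr 1
        exact (congrArg Subtype.val (e.apply_symm_apply ⟨i, h⟩)).symm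
      · simp [hmerge, h]
  rw [hsplit, Finset.sum_product]
  -- Step 3: bound the inner sum for each w
  have hinner : ∀ w ∈ W, ∑ v ∈ Vk, F (merge w v)
      ≤ (∏ i ∈ Finset.univ \ T, g (w i)) *
        ((Qbar.card : ℝ) ^ k * repValue k Qbar V) := by
    intro w hw
    -- the product part is constant in v
    have hprodconst : ∀ v, ∏ i ∈ Finset.univ \ T, g (merge w v i)
        = ∏ i ∈ Finset.univ \ T, g (w i) := by
      intro v
      apply Finset.prod_congr rfl
      intro i hi
      rw [Finset.mem_sdiff] at hi
      congr 1
      funext j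
      simp [hmerge, hi.2]
    have hgw : 0 ≤ ∏ i ∈ Finset.univ \ T, g (w i) := by
      apply Finset.prod_nonneg
      intro i hi
      rw [Finset.mem_sdiff] at hi
      apply hg
      have := Fintype.mem_piFinset.mp hw i
      simpa [hi.2] using this
    -- define the derived strategy for the subgame on T
    set Sw : ∀ j, (Fin k → Q j) → (Fin k → A j) := fun j vj l =>
      S j (fun i => if h : i ∈ T then vj (e.symm ⟨i, h⟩) else w i j) (e l).1 with hSw
    have hstep : ∑ v ∈ Vk, F (merge w v)
        ≤ ∑ v ∈ Vk.filter (fun v => ∀ l, V (v l) (fun j => Sw j (fun l' => v l' j) l) = true),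
          (∏ i ∈ Finset.univ \ T, g (w i)) := by
      rw [Finset.sum_filter]
      apply Finset.sum_le_sum
      intro v hv
      show (if (∀ i, V ((merge w v) i) (fun j => S j (fun i' => (merge w v) i' j) i) = true)
        then ∏ i ∈ Finset.univ \ T, g ((merge w v) i) else 0) ≤ _
      by_cases hacc : ∀ i, V (merge w v i) (fun j => S j (fun i' => merge w v i' j) i) = true
      · rw [if_pos hacc, hprodconst v, if_pos]
        intro l
        have h1 : merge w v (e l).1 = v l := by
          funext j
          simp only [hmerge, dif_pos (e l).2]
          rw [e.symm_apply_apply]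
        have h2 := hacc (e l).1
        rw [h1] at h2
        exact h2
      · rw [if_neg hacc]
        by_cases hacc2 : ∀ l, V (v l) (fun j => Sw j (fun l' => v l' j) l) = true
        · rw [if_pos hacc2]; exact hgw
        · rw [if_neg hacc2]
    refine le_trans hstep ?_
    rw [Finset.sum_const, nsmul_eq_mul]
    have hcardk : (0:ℝ) < ((Qbar.card : ℝ) ^ k) := by
      have h0 : 0 < Qbar.card := Finset.card_pos.mpr ⟨d, hd⟩
      have h0' : (0:ℝ) < (Qbar.card : ℝ) := by exact_mod_cast h0
      exact pow_pos h0' k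
    have hrep := le_repValue k Qbar V Sw
    have hVkcard : ((Fintype.piFinset fun _ : Fin k => Qbar).card : ℝ) = (Qbar.card : ℝ) ^ k := by
      rw [Fintype.card_piFinset]
      push_cast
      rw [Finset.prod_const, Finset.card_univ, Fintype.card_fin]
    rw [hVkcard, div_le_iff₀ hcardk] at hrep
    calc (((Vk.filter fun v => ∀ l, V (v l) (fun j => Sw j (fun l' => v l' j) l) = true).card : ℝ))
          * (∏ i ∈ Finset.univ \ T, g (w i))
        ≤ (repValue k Qbar V * (Qbar.card : ℝ) ^ k) * (∏ i ∈ Finset.univ \ T, g (w i)) := by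
          apply mul_le_mul_of_nonneg_right _ hgw
          exact hrep
      _ = (∏ i ∈ Finset.univ \ T, g (w i)) * ((Qbar.card : ℝ) ^ k * repValue k Qbar V) := by ring
  -- Step 4: sum over w
  have hWsum : ∑ w ∈ W, ∏ i ∈ Finset.univ \ T, g (w i) = (∑ q ∈ Qbar, g q) ^ (n - k) := by
    calc ∑ w ∈ W, ∏ i ∈ Finset.univ \ T, g (w i)
        = ∑ w ∈ W, ∏ i : Fin n, (if i ∈ T then (1:ℝ) else g (w i)) := by
          apply Finset.sum_congr rfl
          intro w hw
          rw [← Finset.prod_sdiff (Finset.subset_univ T)]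
          have h2 : ∏ i ∈ T, (if i ∈ T then (1:ℝ) else g (w i)) = 1 := by
            apply Finset.prod_eq_one
            intro i hi; rw [if_pos hi]
          rw [h2, mul_one]
          apply Finset.prod_congr rfl
          intro i hi
          rw [Finset.mem_sdiff] at hi
          rw [if_neg hi.2]
      _ = ∏ i : Fin n, ∑ x ∈ (if i ∈ T then ({d} : Finset (∀ j, Q j)) else Qbar),
            (if i ∈ T then (1:ℝ) else g x) := by
          rw [Finset.prod_univ_sum]
      _ = ∏ i : Fin n, (if i ∈ T then (1:ℝ) else ∑ q ∈ Qbar, g q) := by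
          apply Finset.prod_congr rfl
          intro i _
          by_cases h : i ∈ T <;> simp [h]
      _ = (∑ q ∈ Qbar, g q) ^ (n - k) := by
          rw [← Finset.prod_sdiff (Finset.subset_univ T)]
          have h2 : ∏ i ∈ T, (if i ∈ T then (1:ℝ) else ∑ q ∈ Qbar, g q) = 1 := by
            apply Finset.prod_eq_one
            intro i hi; rw [if_pos hi]
          have h3 : ∏ i ∈ Finset.univ \ T, (if i ∈ T then (1:ℝ) else ∑ q ∈ Qbar, g q)
              = (∑ q ∈ Qbar, g q) ^ (n - k) := by
            have hcg : ∀ i ∈ Finset.univ \ T,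
                (if i ∈ T then (1:ℝ) else ∑ q ∈ Qbar, g q) = ∑ q ∈ Qbar, g q := by
              intro i hi
              rw [Finset.mem_sdiff] at hi
              exact if_neg hi.2
            rw [Finset.prod_congr rfl hcg, Finset.prod_const,
              Finset.card_sdiff_of_subset (Finset.subset_univ T), Finset.card_univ, Fintype.card_fin]
          rw [h2, h3, mul_one]
  calc ∑ w ∈ W, ∑ v ∈ Vk, F (merge w v)
      ≤ ∑ w ∈ W, (∏ i ∈ Finset.univ \ T, g (w i)) *
          ((Qbar.card : ℝ) ^ k * repValue k Qbar V) := Finset.sum_le_sum hinner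
    _ = (∑ w ∈ W, ∏ i ∈ Finset.univ \ T, g (w i)) *
          ((Qbar.card : ℝ) ^ k * repValue k Qbar V) := by rw [← Finset.sum_mul]
    _ = (∑ q ∈ Qbar, g q) ^ (n - k) * ((Qbar.card : ℝ) ^ k * repValue k Qbar V) := by
          rw [hWsum]

set_option maxHeartbeats 2000000 in
/-- Reduction of parallel repetition for a non-uniform question distribution `Qd` with
support `Qbar`, minimum probability `ε` and `α = ε·|Q̄|`, to the uniform case: if every
non-trivial game over `Qbar` with the uniform distribution satisfies `val(Hᵐ) ≤ f(m)`
(`f` non-increasing, `[0,1]`-valued), then every non-trivial game over the distribution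
`Qd` satisfies `val(Gⁿ) ≤ exp(-α²n/2) + f(⌈αn/2⌉)`. -/
theorem statement3 (r : ℕ) (Q : Fin r → Type) [∀ j, Fintype (Q j)] [∀ j, DecidableEq (Q j)]
    (Qbar : Finset (∀ j, Q j)) (hne : Qbar.Nonempty)
    (hcov : ∀ (j : Fin r) (x : Q j), ∃ q ∈ Qbar, q j = x)
    (Qd : (∀ j, Q j) → ℝ)
    (hpos : ∀ q ∈ Qbar, 0 < Qd q) (hsupp : ∀ q ∉ Qbar, Qd q = 0)
    (hsum : ∑ q ∈ Qbar, Qd q = 1)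
    (ε α : ℝ) (hε : ε = Qbar.inf' hne Qd) (hα : α = ε * (Qbar.card : ℝ))
    (f : ℕ → ℝ) (hf0 : ∀ m, 0 ≤ f m) (hf1 : ∀ m, f m ≤ 1) (hmono : Antitone f)
    (hbound : ∀ m : ℕ, 1 ≤ m → ∀ (A : Fin r → Type),
      (∀ j, Fintype (A j)) → (∀ j, Nonempty (A j)) →
      ∀ V : (∀ j, Q j) → (∀ j, A j) → Bool,
        gameValue Qbar V ≠ 1 → repValue m Qbar V ≤ f m)
    (A : Fin r → Type) [∀ j, Fintype (A j)] [∀ j, Nonempty (A j)]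
    (V : (∀ j, Q j) → (∀ j, A j) → Bool)
    (hnt : distValue Qbar Qd V ≠ 1)
    (n : ℕ) (hn : 1 ≤ n) :
    distRepValue n Qbar Qd V ≤ Real.exp (-(α ^ 2 * n) / 2) + f ⌈α * n / 2⌉₊ := by
  classical
  have hεle : ∀ q ∈ Qbar, ε ≤ Qd q := by
    intro q hq; rw [hε]; exact Finset.inf'_le Qd hq
  have hεpos : 0 < ε := by
    obtain ⟨q0, hq0, hq0e⟩ := Finset.exists_mem_eq_inf' hne Qd
    rw [hε, hq0e]
    exact hpos q0 hq0
  have hcardpos : 0 < Qbar.card := Finset.card_pos.mpr hne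
  have hcardposR : (0:ℝ) < (Qbar.card : ℝ) := by exact_mod_cast hcardpos
  have hαpos : 0 < α := by rw [hα]; positivity
  set g : (∀ j, Q j) → ℝ := fun q => Qd q - ε with hgdef
  have hgnn : ∀ q ∈ Qbar, 0 ≤ g q := fun q hq => sub_nonneg.mpr (hεle q hq)
  have hgsum : ∑ q ∈ Qbar, g q = 1 - α := by
    rw [hgdef, Finset.sum_sub_distrib, hsum, Finset.sum_const, nsmul_eq_mul, hα]
    ring
  have hα1 : α ≤ 1 := by
    have h0 : 0 ≤ ∑ q ∈ Qbar, g q := Finset.sum_nonneg hgnn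
    rw [hgsum] at h0; linarith
  have hVne : gameValue Qbar V ≠ 1 := gameValue_ne_one Qbar hne Qd hpos hsum V hnt
  have hexp0 : (0:ℝ) < Real.exp (-(α ^ 2 * n) / 2) := Real.exp_pos _
  have hnR : (1:ℝ) ≤ (n:ℝ) := by exact_mod_cast hn
  rcases eq_or_lt_of_le hα1 with hα1' | hα1'
  · -- uniform case α = 1
    have hgall : ∀ q ∈ Qbar, Qd q = ε := by
      have h0 : ∑ q ∈ Qbar, g q = 0 := by rw [hgsum, hα1']; ring
      intro q hq
      have h1 := (Finset.sum_eq_zero_iff_of_nonneg hgnn).mp h0 q hq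
      simp only [hgdef] at h1
      linarith
    have hstep : distRepValue n Qbar Qd V ≤ f n := by
      apply Real.sSup_le _ (hf0 n)
      rintro x ⟨S, rfl⟩
      have hval : ∑ q ∈ (Fintype.piFinset fun _ : Fin n => Qbar).filter
            (fun q => ∀ i, V (q i) (fun j => S j (fun i' => q i' j) i) = true),
          ∏ i, Qd (q i)
          = (((Fintype.piFinset fun _ : Fin n => Qbar).filter fun q =>
              ∀ i, V (q i) (fun j => S j (fun i' => q i' j) i) = true).card : ℝ) /
            ((Fintype.piFinset fun _ : Fin n => Qbar).card : ℝ) := by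
        have h1 : ∀ q ∈ (Fintype.piFinset fun _ : Fin n => Qbar).filter
              (fun q => ∀ i, V (q i) (fun j => S j (fun i' => q i' j) i) = true),
            ∏ i, Qd (q i) = ε ^ n := by
          intro q hq
          rw [Finset.mem_filter] at hq
          have h2 : ∀ i : Fin n, Qd (q i) = ε := fun i =>
            hgall (q i) (Fintype.mem_piFinset.mp hq.1 i)
          rw [Finset.prod_congr rfl (fun i _ => h2 i), Finset.prod_const,
            Finset.card_univ, Fintype.card_fin]
        rw [Finset.sum_congr rfl h1, Finset.sum_const, nsmul_eq_mul]
        have hpin : ((Fintype.piFinset fun _ : Fin n => Qbar).card : ℝ)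
            = (Qbar.card : ℝ) ^ n := by
          rw [Fintype.card_piFinset]
          push_cast
          rw [Finset.prod_const, Finset.card_univ, Fintype.card_fin]
        have hεcard : ε = 1 / (Qbar.card : ℝ) := by
          rw [eq_div_iff (ne_of_gt hcardposR), ← hα, hα1']
        rw [hpin, hεcard, div_pow, one_pow]
        field_simp
      rw [hval]
      refine le_trans (le_repValue n Qbar V S) ?_
      exact hbound n hn A (fun j => inferInstance) (fun j => inferInstance) V hVne
    have hmle : ⌈α * n / 2⌉₊ ≤ n := by
      apply Nat.ceil_le.mpr
      rw [hα1']
      push_cast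
      linarith
    calc distRepValue n Qbar Qd V ≤ f n := hstep
      _ ≤ f ⌈α * n / 2⌉₊ := hmono hmle
      _ ≤ Real.exp (-(α ^ 2 * n) / 2) + f ⌈α * n / 2⌉₊ := by linarith
  · -- main case α < 1
    set m := ⌈α * n / 2⌉₊ with hm
    have hm0 : 0 < m := Nat.ceil_pos.mpr (by nlinarith)
    apply Real.sSup_le _ (add_nonneg hexp0.le (hf0 m))
    rintro x ⟨S, rfl⟩
    set Φ := (Fintype.piFinset fun _ : Fin n => Qbar).filter
      (fun q => ∀ i, V (q i) (fun j => S j (fun i' => q i' j) i) = true) with hΦ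
    have hA : ∑ q ∈ Φ, ∏ i, Qd (q i)
        = ∑ T ∈ (Finset.univ : Finset (Fin n)).powerset, ε ^ T.card *
            ∑ q ∈ Φ, ∏ i ∈ Finset.univ \ T, g (q i) := by
      have h1 : ∀ q ∈ Φ, ∏ i, Qd (q i)
          = ∑ T ∈ (Finset.univ : Finset (Fin n)).powerset,
              ε ^ T.card * ∏ i ∈ Finset.univ \ T, g (q i) := by
        intro q _
        have h2 : ∀ i : Fin n, Qd (q i) = ε + g (q i) := fun i => by
          simp only [hgdef]; ring
        rw [Finset.prod_congr rfl (fun i _ => h2 i), Finset.prod_add]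
        apply Finset.sum_congr rfl
        intro T _
        rw [Finset.prod_const]
      rw [Finset.sum_congr rfl h1, Finset.sum_comm]
      apply Finset.sum_congr rfl
      intro T _
      rw [Finset.mul_sum]
    rw [hA]
    have hBC : ∀ T ∈ (Finset.univ : Finset (Fin n)).powerset,
        ε ^ T.card * ∑ q ∈ Φ, ∏ i ∈ Finset.univ \ T, g (q i)
        ≤ α ^ T.card * (1 - α) ^ (n - T.card) * repValue T.card Qbar V := by
      intro T _
      have hib := inner_bound Qbar hne V g hgnn S T
      rw [hgsum, ← hΦ] at hib
      calc ε ^ T.card * ∑ q ∈ Φ, ∏ i ∈ Finset.univ \ T, g (q i)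
          ≤ ε ^ T.card * ((1 - α) ^ (n - T.card) *
              ((Qbar.card : ℝ) ^ T.card * repValue T.card Qbar V)) :=
            mul_le_mul_of_nonneg_left hib (pow_nonneg hεpos.le _)
        _ = α ^ T.card * (1 - α) ^ (n - T.card) * repValue T.card Qbar V := by
            rw [hα, mul_pow]; ring
    refine le_trans (Finset.sum_le_sum hBC) ?_
    rw [← Finset.sum_filter_add_sum_filter_not
      ((Finset.univ : Finset (Fin n)).powerset) (fun T => T.card < m)]
    have hwnn : ∀ T : Finset (Fin n), 0 ≤ α ^ T.card * (1 - α) ^ (n - T.card) := by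
      intro T
      apply mul_nonneg (pow_nonneg hαpos.le _) (pow_nonneg (by linarith) _)
    have hD1 : ∑ T ∈ ((Finset.univ : Finset (Fin n)).powerset).filter (fun T => T.card < m),
        α ^ T.card * (1 - α) ^ (n - T.card) * repValue T.card Qbar V
        ≤ Real.exp (-(α ^ 2 * n) / 2) := by
      calc ∑ T ∈ ((Finset.univ : Finset (Fin n)).powerset).filter (fun T => T.card < m),
          α ^ T.card * (1 - α) ^ (n - T.card) * repValue T.card Qbar V
          ≤ ∑ T ∈ ((Finset.univ : Finset (Fin n)).powerset).filter (fun T => T.card < m),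
            α ^ T.card * (1 - α) ^ (n - T.card) := by
            apply Finset.sum_le_sum
            intro T _
            exact mul_le_of_le_one_right (hwnn T) (repValue_le_one T.card Qbar V)
        _ = ∑ T ∈ ((Finset.univ : Finset (Fin n)).powerset).filter
              (fun T => (T.card : ℝ) < α * n / 2),
            α ^ T.card * (1 - α) ^ (n - T.card) := by
            apply Finset.sum_congr _ (fun _ _ => rfl)
            apply Finset.filter_congr
            intro T _
            rw [hm]
            exact Nat.lt_ceil
        _ ≤ Real.exp (-(α ^ 2 * n) / 2) := tail_bound α hαpos hα1' n
    have hD2 : ∑ T ∈ ((Finset.univ : Finset (Fin n)).powerset).filter (fun T => ¬ T.card < m),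
        α ^ T.card * (1 - α) ^ (n - T.card) * repValue T.card Qbar V ≤ f m := by
      calc ∑ T ∈ ((Finset.univ : Finset (Fin n)).powerset).filter (fun T => ¬ T.card < m),
          α ^ T.card * (1 - α) ^ (n - T.card) * repValue T.card Qbar V
          ≤ ∑ T ∈ ((Finset.univ : Finset (Fin n)).powerset).filter (fun T => ¬ T.card < m),
            α ^ T.card * (1 - α) ^ (n - T.card) * f m := by
            apply Finset.sum_le_sum
            intro T hT
            rw [Finset.mem_filter] at hT
            have hkm : m ≤ T.card := Nat.le_of_not_lt hT.2
            have hr1 : repValue T.card Qbar V ≤ f T.card :=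
              hbound T.card (le_trans hm0 hkm) A (fun j => inferInstance)
                (fun j => inferInstance) V hVne
            have hr2 : f T.card ≤ f m := hmono hkm
            exact mul_le_mul_of_nonneg_left (le_trans hr1 hr2) (hwnn T)
        _ ≤ ∑ T ∈ (Finset.univ : Finset (Fin n)).powerset,
            α ^ T.card * (1 - α) ^ (n - T.card) * f m := by
            apply Finset.sum_le_sum_of_subset_of_nonneg (Finset.filter_subset _ _)
            intro T _ _
            exact mul_nonneg (hwnn T) (hf0 m)
        _ = (∑ T ∈ (Finset.univ : Finset (Fin n)).powerset,
            α ^ T.card * (1 - α) ^ (n - T.card)) * f m := by rw [← Finset.sum_mul]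
        _ = f m := by
            rw [sum_powerset_pow]
            have : α + (1 - α) = 1 := by ring
            rw [this, one_pow, one_mul]
    exact add_le_add hD1 hD2
end

section
/- Let r ≥ 3, n ≥ 1, S ⊆ [r]^n. If S contains a combinatorial line, then the game G_S is trivial, i.e., val(G_S) = 1. -/
/-- The verifier of the game `G_S` (for `S ⊆ [r]^n`) over the question set `Q̄_r`:
each prover answers a pair `(T, z) ∈ 2^[n] × [n]`; the verifier accepts iff all the
`z`'s agree, the special prover's `z` lies in its set `T`, and the sets `T⁽¹⁾,…,T⁽ʳ⁾`
form a partition of `[n]` whose induced string (sending `i` to the unique `j` with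
`i ∈ T⁽ʲ⁾`) belongs to `S`. -/
def VS {r n : ℕ} (S : Finset (Fin n → Fin r)) (q : Fin r → Bool)
    (ans : Fin r → Finset (Fin n) × Fin n) : Bool :=
  decide ((∀ j j' : Fin r, (ans j).2 = (ans j').2) ∧
    (∀ a : Fin r, q a = true → (ans a).2 ∈ (ans a).1) ∧
    (∃ s : Fin n → Fin r, s ∈ S ∧ ∀ (i : Fin n) (j : Fin r), s i = j ↔ i ∈ (ans j).1))

/-- If `S ⊆ [r]^n` contains a combinatorial line (with `r ≥ 3`, `n ≥ 1`),
then the game `G_S` is trivial. -/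
theorem statement4 (r n : ℕ) (hr : 3 ≤ r) (hn : 1 ≤ n)
    (S : Finset (Fin n → Fin r)) (hline : HasCombLine (↑S : Set (Fin n → Fin r))) :
    gameValue (QbarR r) (VS S) = 1 := by
  obtain ⟨b, ⟨i0, hi0⟩, hb⟩ := hline
  -- the perfect strategy
  set St : ∀ _ : Fin r, Bool → Finset (Fin n) × Fin n :=
    fun j bit =>
      (Finset.univ.filter (fun i => b i = some j ∨ (bit = true ∧ b i = none)), i0) with hSt
  have hperfect : ∀ q ∈ QbarR r, VS S q (fun j => St j (q j)) = true := by
    intro q hq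
    simp only [QbarR, Finset.mem_filter, Finset.mem_univ, true_and] at hq
    obtain ⟨a, ha⟩ := Finset.card_eq_one.mp hq
    have hqa : ∀ j, q j = true ↔ j = a := by
      intro j
      constructor
      · intro h
        have : j ∈ Finset.univ.filter (fun j => q j = true) := by simp [h]
        rw [ha] at this; simpa using this
      · intro h
        rw [h]
        have : a ∈ ({a} : Finset (Fin r)) := Finset.mem_singleton_self a
        rw [← ha] at this; simpa using this
    unfold VS
    rw [decide_eq_true_eq]
    refine ⟨fun j j' => rfl, ?_, patternLine b a, hb a, ?_⟩
    · intro a' hqa'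
      simp only [hSt, Finset.mem_filter, Finset.mem_univ, true_and]
      right; exact ⟨hqa', hi0⟩
    · intro i j
      simp only [hSt, Finset.mem_filter, Finset.mem_univ, true_and, patternLine]
      cases hbi : b i with
      | none => simp [hqa j, eq_comm]
      | some j' => simp
  have hQne : (QbarR r).Nonempty := by
    refine ⟨fun j => decide (j = ⟨0, by omega⟩), ?_⟩
    simp only [QbarR, Finset.mem_filter, Finset.mem_univ, true_and]
    refine Finset.card_eq_one.mpr ⟨⟨0, by omega⟩, ?_⟩
    ext j; simp
  have hQcard : (0 : ℝ) < (QbarR r).card := by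
    exact_mod_cast Finset.card_pos.mpr hQne
  have hmem : (1 : ℝ) ∈ { x : ℝ | ∃ T : ∀ j : Fin r, Bool → Finset (Fin n) × Fin n,
      x = (((QbarR r).filter fun q => VS S q (fun j => T j (q j)) = true).card : ℝ) /
        ((QbarR r).card : ℝ) } := by
    refine ⟨St, ?_⟩
    rw [Finset.filter_true_of_mem hperfect]
    field_simp
  have hub : ∀ x ∈ { x : ℝ | ∃ T : ∀ j : Fin r, Bool → Finset (Fin n) × Fin n,
      x = (((QbarR r).filter fun q => VS S q (fun j => T j (q j)) = true).card : ℝ) /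
        ((QbarR r).card : ℝ) }, x ≤ 1 := by
    rintro x ⟨T, rfl⟩
    rw [div_le_one hQcard]
    exact_mod_cast Finset.card_filter_le _ _
  unfold gameValue
  exact le_antisymm (csSup_le ⟨1, hmem⟩ hub) (le_csSup ⟨1, hub⟩ hmem)
end

section
/- Let r ≥ 3, n ≥ 1, S ⊆ [r]^n. Then val(G_S^n) ≥ μ(S) = |S|/r^n. -/
/-- Encode a string `s ∈ [r]^n` as a question tuple sequence: round `i`'s question
tuple is the indicator of `s i`. -/
def toQ {r n : ℕ} (s : Fin n → Fin r) : Fin n → Fin r → Bool :=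
  fun i j => decide (s i = j)

lemma toQ_inj {r n : ℕ} : Function.Injective (toQ (r := r) (n := n)) := by
  intro s s' h
  funext i
  have := congrFun (congrFun h i) (s' i)
  simpa [toQ] using this

lemma indicator_mem_QbarR {r : ℕ} (a : Fin r) :
    (fun j => decide (a = j)) ∈ QbarR r := by
  simp only [QbarR, Finset.mem_filter, Finset.mem_univ, true_and]
  have h : (Finset.univ.filter fun j : Fin r => decide (a = j) = true) = {a} := by
    ext j; simp [eq_comm]
  rw [h, Finset.card_singleton]

lemma toQ_mem {r n : ℕ} (s : Fin n → Fin r) :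
    toQ s ∈ Fintype.piFinset fun _ : Fin n => QbarR r := by
  rw [Fintype.mem_piFinset]
  intro i
  exact indicator_mem_QbarR (s i)

/-- The honest strategy: a prover seeing its vector of bits `x` answers in round `i`
with the set of rounds where its bit is 1, together with `z = i`. -/
def strat (r n : ℕ) : ∀ _ : Fin r, (Fin n → Bool) → Fin n → Finset (Fin n) × Fin n :=
  fun _ x i => (Finset.univ.filter fun i' => x i' = true, i)

lemma qbarR_card (r : ℕ) : (QbarR r).card = r := by
  have h : QbarR r = Finset.univ.image (fun a : Fin r => fun j => decide (a = j)) := by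
    ext q
    simp only [Finset.mem_image, Finset.mem_univ, true_and]
    constructor
    · intro hq
      simp only [QbarR, Finset.mem_filter, Finset.mem_univ, true_and] at hq
      obtain ⟨a, ha⟩ := Finset.card_eq_one.mp hq
      refine ⟨a, funext fun j => ?_⟩
      have hj : q j = true ↔ j = a := by
        have := Finset.ext_iff.mp ha j
        simpa using this
      by_cases hja : a = j
      · subst hja; simp [hj.mpr rfl]
      · have : q j ≠ true := fun h' => hja (hj.mp h').symm
        simp [hja, Bool.not_eq_true] at this ⊢
        simp [this]
    · rintro ⟨a, rfl⟩
      exact indicator_mem_QbarR a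
  rw [h, Finset.card_image_of_injective _ ?_, Finset.card_univ, Fintype.card_fin]
  intro a a' hh
  have := congrFun hh a'
  simpa [eq_comm] using this

lemma filter_strat_eq {r n : ℕ} (hn : 1 ≤ n) (S : Finset (Fin n → Fin r)) :
    ((Fintype.piFinset fun _ : Fin n => QbarR r).filter fun q =>
        ∀ i, VS S (q i) (fun j => strat r n j (fun i' => q i' j) i) = true)
      = S.image toQ := by
  ext q
  simp only [Finset.mem_filter, Finset.mem_image]
  constructor
  · rintro ⟨hq, hV⟩
    have hV0 := hV ⟨0, hn⟩
    simp only [VS, strat, decide_eq_true_eq] at hV0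
    obtain ⟨-, -, s, hsS, hs⟩ := hV0
    refine ⟨s, hsS, ?_⟩
    funext i j
    have h := hs i j
    simp only [Finset.mem_filter, Finset.mem_univ, true_and] at h
    -- h : s i = j ↔ q i j = true
    cases hqij : q i j
    · have hne : ¬ s i = j := fun hh => by rw [h.mp hh] at hqij; exact Bool.noConfusion hqij
      simp [toQ, hne]
    · have : s i = j := h.mpr hqij
      simp [toQ, this]
  · rintro ⟨s, hsS, rfl⟩
    refine ⟨toQ_mem s, ?_⟩
    intro i
    simp only [VS, strat, decide_eq_true_eq]
    refine ⟨fun _ _ => trivial, ?_, s, hsS, ?_⟩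
    · intro a ha
      simp only [Finset.mem_filter, Finset.mem_univ, true_and]
      exact ha
    · intro i' j
      simp [toQ]

/-- For `r ≥ 3`, `n ≥ 1` and `S ⊆ [r]^n`, the value of the `n`-fold parallel
repetition of the game `G_S` is at least `μ(S) = |S|/rⁿ`. -/
theorem statement6 (r n : ℕ) (hr : 3 ≤ r) (hn : 1 ≤ n)
    (S : Finset (Fin n → Fin r)) :
    (S.card : ℝ) / (r : ℝ) ^ n ≤ repValue n (QbarR r) (VS S) := by
  apply le_csSup
  · refine ⟨1, ?_⟩
    rintro x ⟨St, rfl⟩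
    apply div_le_one_of_le₀
    · exact_mod_cast Finset.card_filter_le _ _
    · positivity
  · refine ⟨strat r n, ?_⟩
    rw [filter_strat_eq hn S, Finset.card_image_of_injective _ toQ_inj]
    congr 1
    rw [Fintype.card_piFinset]
    simp [qbarR_card]
end

section
/- Let r ≥ 3. The only homomorphisms of the question set Q̄_r to itself are the identity homomorphism Id and the constant homomorphisms 1_q̄ for q̄ ∈ Q̄_r. -/
/-- For `r ≥ 3`, the only homomorphisms of the question set `Q̄_r` into itself
(tuples of maps `f j : Bool → Bool`, one per prover, sending hyperedges of `Q̄_r`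
to hyperedges of `Q̄_r`) are the identity homomorphism and the constant
homomorphisms `1_q̄` for hyperedges `q̄ ∈ Q̄_r`. -/
theorem statement7 (r : ℕ) (hr : 3 ≤ r) (f : ∀ _ : Fin r, Bool → Bool)
    (hf : ∀ q ∈ QbarR r, (fun j => f j (q j)) ∈ QbarR r) :
    (∀ j, f j = id) ∨ ∃ qbar ∈ QbarR r, ∀ (j : Fin r) (b : Bool), f j b = qbar j := by
  -- basis vectors are in QbarR
  have hE : ∀ i : Fin r, (fun j => decide (j = i)) ∈ QbarR r := by
    intro i
    simp only [QbarR, Finset.mem_filter, Finset.mem_univ, true_and]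
    have h : (Finset.univ.filter fun j : Fin r => decide (j = i) = true) = {i} := by
      ext j; simp
    rw [h]; simp
  -- the image of each basis vector is a singleton-support vector
  have hT : ∀ i : Fin r, ∃ a, (Finset.univ.filter
      fun j => f j (decide (j = i)) = true) = {a} := by
    intro i
    have h := hf _ (hE i)
    simp only [QbarR, Finset.mem_filter, Finset.mem_univ, true_and] at h
    exact Finset.card_eq_one.mp h
  have memT : ∀ i j : Fin r, j ∈ (Finset.univ.filter
      fun j => f j (decide (j = i)) = true) ↔ f j (decide (j = i)) = true := by
    intro i j; simp
  by_cases hA : ∃ a, f a false = true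
  · obtain ⟨a, ha⟩ := hA
    -- uniqueness of a
    have huniq : ∀ b, f b false = true → b = a := by
      intro b hb
      by_contra hba
      have hex : ∃ i : Fin r, i ≠ a ∧ i ≠ b := by
        have hcard : Fintype.card (Fin r) = r := Fintype.card_fin r
        have hne : (({a, b} : Finset (Fin r))ᶜ).Nonempty := by
          rw [← Finset.card_pos, Finset.card_compl]
          have h2 : ({a, b} : Finset (Fin r)).card ≤ 2 :=
            (Finset.card_insert_le _ _).trans (by simp)
          omega
        obtain ⟨i, hi⟩ := hne
        simp only [Finset.mem_compl, Finset.mem_insert, Finset.mem_singleton, not_or] at hi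
        exact ⟨i, hi.1, hi.2⟩
      obtain ⟨i, hia, hib⟩ := hex
      obtain ⟨c, hc⟩ := hT i
      have haT : a ∈ (Finset.univ.filter fun j => f j (decide (j = i)) = true) := by
        rw [memT]
        have : decide (a = i) = false := decide_eq_false (fun h => hia h.symm)
        rw [this]; exact ha
      have hbT : b ∈ (Finset.univ.filter fun j => f j (decide (j = i)) = true) := by
        rw [memT]
        have : decide (b = i) = false := decide_eq_false (fun h => hib h.symm)
        rw [this]; exact hb
      rw [hc, Finset.mem_singleton] at haT hbT
      exact hba (hbT.trans haT.symm)
    -- f a true = true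
    have hat : f a true = true := by
      obtain ⟨c, hc⟩ := hT a
      have hcT : c ∈ (Finset.univ.filter fun j => f j (decide (j = a)) = true) := by
        rw [hc]; exact Finset.mem_singleton_self c
      rw [memT] at hcT
      by_cases hca : c = a
      · subst hca; simpa using hcT
      · exfalso
        have : decide (c = a) = false := by simp [hca]
        rw [this] at hcT
        exact hca (huniq c hcT)
    -- f j true = false for j ≠ a
    have hjt : ∀ j : Fin r, j ≠ a → f j true = false := by
      intro j hja
      by_contra h
      have hjt' : f j true = true := by
        cases hb : f j true
        · exact absurd hb h
        · rfl
      obtain ⟨c, hc⟩ := hT j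
      have haT : a ∈ (Finset.univ.filter fun i => f i (decide (i = j)) = true) := by
        rw [memT]
        have : decide (a = j) = false := decide_eq_false (fun h => hja h.symm)
        rw [this]; exact ha
      have hjT : j ∈ (Finset.univ.filter fun i => f i (decide (i = j)) = true) := by
        rw [memT]; simpa using hjt'
      rw [hc, Finset.mem_singleton] at haT hjT
      exact hja (hjT.trans haT.symm)
    right
    refine ⟨fun j => decide (j = a), hE a, ?_⟩
    intro j b
    by_cases hja : j = a
    · subst hja
      cases b
      · simpa using ha
      · simpa using hat
    · have hd : decide (j = a) = false := by simp [hja]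
      show f j b = decide (j = a)
      rw [hd]
      cases b
      · cases hb : f j false
        · rfl
        · exact absurd (huniq j hb) hja
      · exact hjt j hja
  · -- no j with f j false = true : identity case
    push_neg at hA
    left
    intro i
    have hit : f i true = true := by
      obtain ⟨c, hc⟩ := hT i
      have hcT : c ∈ (Finset.univ.filter fun j => f j (decide (j = i)) = true) := by
        rw [hc]; exact Finset.mem_singleton_self c
      rw [memT] at hcT
      by_cases hci : c = i
      · subst hci; simpa using hcT
      · exfalso
        have : decide (c = i) = false := by simp [hci]
        rw [this] at hcT
        exact absurd hcT (by simp [hA c])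
    funext b
    cases b
    · simpa using Bool.eq_false_iff.mpr (fun h => absurd h (by simp [hA i]))
    · exact hit
end

section
/- Let Q̄ be an r-prover question set. For every n ≥ 1, ω_Q̄(n) ≤ ω^good_Q̄(n): the maximum of val(G^n) over non-trivial games G with question set Q̄ is at most inf{ε : Q̄ is (n,ε)-good}. -/
/-- `f` is a homomorphism of the question set `Qbar` (a tuple of maps, one per
prover, sending every hyperedge of `Qbar` to a hyperedge of `Qbar`). -/
def QHom {r : ℕ} {Q : Fin r → Type} (Qbar : Finset (∀ j, Q j))
    (f : ∀ j, Q j → Q j) : Prop :=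
  ∀ q ∈ Qbar, (fun j => f j (q j)) ∈ Qbar

/-- A vector `f = (f_1, …, f_n)` of homomorphisms of `Qbar` is good for
`S ⊆ Q̄ⁿ` if the image of every hyperedge under `f` lies in `S` and some `f i`
is the identity. -/
def GoodFor {r : ℕ} {Q : Fin r → Type} (Qbar : Finset (∀ j, Q j)) {n : ℕ}
    (S : Finset (Fin n → ∀ j, Q j)) (f : Fin n → ∀ j, Q j → Q j) : Prop :=
  (∀ i, QHom Qbar (f i)) ∧ (∃ i, ∀ j, f i j = id) ∧
    ∀ q ∈ Qbar, (fun i j => f i j (q j)) ∈ S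

/-- `Qbar` is `(n, ε)`-good: every `S ⊆ Q̄ⁿ` with `μ(S) = |S|/|Q̄|ⁿ ≥ ε` admits a
good vector of homomorphisms. -/
def IsGood {r : ℕ} {Q : Fin r → Type} [∀ j, Fintype (Q j)] [∀ j, DecidableEq (Q j)]
    (Qbar : Finset (∀ j, Q j)) (n : ℕ) (ε : ℝ) : Prop :=
  ∀ S : Finset (Fin n → ∀ j, Q j), S ⊆ Fintype.piFinset (fun _ => Qbar) →
    ε ≤ (S.card : ℝ) / (Qbar.card : ℝ) ^ n →
    ∃ f : Fin n → ∀ j, Q j → Q j, GoodFor Qbar S f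

/-- `ω^good_Q̄(n) = inf {ε : Q̄ is (n,ε)-good}`. -/
noncomputable def omegaGood {r : ℕ} {Q : Fin r → Type} [∀ j, Fintype (Q j)]
    [∀ j, DecidableEq (Q j)] (Qbar : Finset (∀ j, Q j)) (n : ℕ) : ℝ :=
  sInf { ε : ℝ | IsGood Qbar n ε }

lemma gameValue_eq_one {r : ℕ} {Q A : Fin r → Type}
    (Qbar : Finset (∀ j, Q j)) (hne : Qbar.Nonempty)
    (V : (∀ j, Q j) → (∀ j, A j) → Bool)
    (S : ∀ j, Q j → A j) (hwin : ∀ q ∈ Qbar, V q (fun j => S j (q j)) = true) :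
    gameValue Qbar V = 1 := by
  have hcard : (0 : ℝ) < Qbar.card := by
    exact_mod_cast Finset.card_pos.mpr hne
  apply le_antisymm
  · apply Real.sSup_le _ zero_le_one
    rintro x ⟨T, rfl⟩
    rw [div_le_one hcard]
    exact_mod_cast Finset.card_filter_le _ _
  · apply le_csSup
    · refine ⟨1, ?_⟩
      rintro x ⟨T, rfl⟩
      rw [div_le_one hcard]
      exact_mod_cast Finset.card_filter_le _ _
    · refine ⟨S, ?_⟩
      rw [Finset.filter_true_of_mem hwin, div_self (ne_of_gt hcard)]

lemma isGood_nonneg {r : ℕ} {Q : Fin r → Type} [∀ j, Fintype (Q j)]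
    [∀ j, DecidableEq (Q j)] {Qbar : Finset (∀ j, Q j)} (hne : Qbar.Nonempty)
    {n : ℕ} {ε : ℝ} (hg : IsGood Qbar n ε) : 0 ≤ ε := by
  by_contra h
  push_neg at h
  obtain ⟨f, _, _, hmem⟩ := hg ∅ (Finset.empty_subset _) (by
    simpa using h.le)
  obtain ⟨q, hq⟩ := hne
  exact absurd (hmem q hq) (Finset.notMem_empty _)

lemma repValue_le_of_isGood {r : ℕ} {Q A : Fin r → Type} [∀ j, Fintype (Q j)]
    [∀ j, DecidableEq (Q j)] {Qbar : Finset (∀ j, Q j)} (hne : Qbar.Nonempty)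
    {n : ℕ} {ε : ℝ} (hg : IsGood Qbar n ε)
    (V : (∀ j, Q j) → (∀ j, A j) → Bool) (hnt : gameValue Qbar V ≠ 1) :
    repValue n Qbar V ≤ ε := by
  have hden : ((Fintype.piFinset fun _ : Fin n => Qbar).card : ℝ)
      = (Qbar.card : ℝ) ^ n := by
    rw [Fintype.card_piFinset]
    push_cast
    simp [Finset.prod_const]
  apply Real.sSup_le _ (isGood_nonneg hne hg)
  rintro x ⟨S, rfl⟩
  by_contra hlt
  push_neg at hlt
  set W := (Fintype.piFinset fun _ : Fin n => Qbar).filter fun q =>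
      ∀ i, V (q i) (fun j => S j (fun i' => q i' j) i) = true with hW
  have hεle : ε ≤ (W.card : ℝ) / (Qbar.card : ℝ) ^ n := by
    rw [← hden]
    exact hlt.le
  obtain ⟨f, _, ⟨i₀, hid⟩, hmem⟩ := hg W (Finset.filter_subset _ _) hεle
  apply hnt
  refine gameValue_eq_one Qbar hne V
    (fun j x => S j (fun i' => f i' j x) i₀) (fun q hq => ?_)
  have h1 := (Finset.mem_filter.mp (hmem q hq)).2 i₀
  have hq0 : (fun j => f i₀ j (q j)) = q := by
    funext j
    rw [hid j]
    rfl
  simpa [hq0] using h1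

/-- The forbidden-subgraph (good-sets) method: for every `r`-prover question set
`Qbar` and every `n ≥ 1`, `ω_Q̄(n) ≤ ω^good_Q̄(n)`. -/
theorem statement9 (r : ℕ) (Q : Fin r → Type) [∀ j, Fintype (Q j)]
    [∀ j, DecidableEq (Q j)] (Qbar : Finset (∀ j, Q j)) (hne : Qbar.Nonempty)
    (hcov : ∀ (j : Fin r) (x : Q j), ∃ q ∈ Qbar, q j = x)
    (n : ℕ) (hn : 1 ≤ n) :
    omegaQ Qbar n ≤ omegaGood Qbar n := by
  have hcard : (0 : ℝ) < Qbar.card := by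
    exact_mod_cast Finset.card_pos.mpr hne
  have h2 : IsGood Qbar n 2 := by
    intro S hS hle
    exfalso
    have hle1 : (S.card : ℝ) / (Qbar.card : ℝ) ^ n ≤ 1 := by
      rw [div_le_one (by positivity)]
      calc (S.card : ℝ) ≤ ((Fintype.piFinset fun _ : Fin n => Qbar).card : ℝ) := by
            exact_mod_cast Finset.card_le_card hS
        _ = (Qbar.card : ℝ) ^ n := by
            rw [Fintype.card_piFinset]; push_cast; simp [Finset.prod_const]
    linarith
  have hTne : Set.Nonempty { ε : ℝ | IsGood Qbar n ε } := ⟨2, h2⟩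
  apply Real.sSup_le
  · rintro x ⟨A, fA, nA, V, hnt, rfl⟩
    apply le_csInf hTne
    intro ε hε
    exact repValue_le_of_isGood hne hε V hnt
  · apply le_csInf hTne
    intro ε hε
    exact isGood_nonneg hne hε
end

section
/- Let Q̄ be an r-prover question set, let C ≥ 1 and ε > 0, and let ℋ be a probability distribution over Hom(Q̄,Q̄) such that ℋ(Id) ≥ ε and such that, when f = (f_1,…,f_n) is sampled with each f_i i.i.d. from ℋ, for every S ⊆ Q̄^n one has Pr[∀ q̄ ∈ Q̄ : (f_1(q̄),…,f_n(q̄)) ∈ S] ≥ μ(S)^C / C, where μ(S) = |S|/|Q̄|^n. Then for every n, ω^good_Q̄(n) ≤ 3·exp(−εn/C). -/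
/-- The finite set `Hom(Q̄, Q̄)` of homomorphisms of the question set `Qbar`. -/
def homFinset {r : ℕ} {Q : Fin r → Type} [∀ j, Fintype (Q j)] [∀ j, DecidableEq (Q j)]
    (Qbar : Finset (∀ j, Q j)) : Finset (∀ j, Q j → Q j) :=
  Finset.univ.filter fun f => ∀ q ∈ Qbar, (fun j => f j (q j)) ∈ Qbar

/-- Probabilistic method for goodness: if `H` is a probability distribution over
`Hom(Q̄,Q̄)` with `H(Id) ≥ ε` that is polynomially same-set hitting with constant
`C ≥ 1` (for every `n` and every `S ⊆ Q̄ⁿ`, an i.i.d. `H`-vector of homomorphisms maps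
all hyperedges simultaneously into `S` with probability at least `μ(S)^C / C`),
then `ω^good_Q̄(n) ≤ 3·exp(-εn/C)` for every `n`. -/
theorem statement10 (r : ℕ) (Q : Fin r → Type) [∀ j, Fintype (Q j)]
    [∀ j, DecidableEq (Q j)] (Qbar : Finset (∀ j, Q j)) (hne : Qbar.Nonempty)
    (hcov : ∀ (j : Fin r) (x : Q j), ∃ q ∈ Qbar, q j = x)
    (C ε : ℝ) (hC : 1 ≤ C) (hε : 0 < ε)
    (H : (∀ j, Q j → Q j) → ℝ)
    (hH0 : ∀ f, 0 ≤ H f)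
    (hHsupp : ∀ f ∉ homFinset Qbar, H f = 0)
    (hHsum : ∑ f ∈ homFinset Qbar, H f = 1)
    (hHid : ε ≤ H (fun _ => id))
    (hhit : ∀ (n : ℕ) (S : Finset (Fin n → ∀ j, Q j)),
      S ⊆ Fintype.piFinset (fun _ => Qbar) →
      ((S.card : ℝ) / (Qbar.card : ℝ) ^ n) ^ C / C ≤
        ∑ F ∈ (Fintype.piFinset fun _ : Fin n => homFinset Qbar).filter
            (fun F => ∀ q ∈ Qbar, (fun i j => F i j (q j)) ∈ S),
          ∏ i, H (F i))
    (n : ℕ) :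
    omegaGood Qbar n ≤ 3 * Real.exp (-(ε * n) / C) := by
  classical
  have hC0 : (0:ℝ) < C := lt_of_lt_of_le one_pos hC
  set idf : ∀ j, Q j → Q j := fun _ => id with hidf
  have hidmem : idf ∈ homFinset Qbar := by
    simp only [homFinset, Finset.mem_filter, Finset.mem_univ, true_and, hidf, id]
    intro q hq; simpa using hq
  have hHid1 : H idf ≤ 1 := by
    rw [← hHsum]
    exact Finset.single_le_sum (fun f _ => hH0 f) hidmem
  have hε1 : ε ≤ 1 := le_trans hHid hHid1
  set δ := 3 * Real.exp (-(ε * n) / C) with hδdef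
  have hδpos : 0 < δ := by positivity
  have hgood : IsGood Qbar n δ := by
    intro S hS hμ
    set μ : ℝ := (S.card : ℝ) / (Qbar.card : ℝ) ^ n with hμdef
    -- probability of missing identity everywhere
    have hBsplit :
        ((Fintype.piFinset fun _ : Fin n => homFinset Qbar).filter
            (fun F => ∀ i, F i ≠ idf)) =
          Fintype.piFinset (fun _ : Fin n => (homFinset Qbar).erase idf) := by
      ext F
      simp only [Finset.mem_filter, Fintype.mem_piFinset, Finset.mem_erase]
      constructor
      · rintro ⟨h1, h2⟩ a; exact ⟨h2 a, h1 a⟩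
      · intro h; exact ⟨fun a => (h a).2, fun a => (h a).1⟩
    have hB : ∑ F ∈ (Fintype.piFinset fun _ : Fin n => homFinset Qbar).filter
          (fun F => ∀ i, F i ≠ idf), ∏ i, H (F i) = (1 - H idf) ^ n := by
      rw [hBsplit, ← Finset.prod_univ_sum]
      have : ∑ f ∈ (homFinset Qbar).erase idf, H f = 1 - H idf := by
        rw [Finset.sum_erase_eq_sub hidmem, hHsum]
      simp [this]
    -- split the hitting probability
    set T := (Fintype.piFinset fun _ : Fin n => homFinset Qbar).filter
        (fun F => ∀ q ∈ Qbar, (fun i j => F i j (q j)) ∈ S) with hT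
    have hsplit : ∑ F ∈ T, ∏ i, H (F i) =
        (∑ F ∈ T.filter (fun F => ∃ i, F i = idf), ∏ i, H (F i)) +
        ∑ F ∈ T.filter (fun F => ¬ ∃ i, F i = idf), ∏ i, H (F i) :=
      (Finset.sum_filter_add_sum_filter_not T _ _).symm
    have hsub : T.filter (fun F => ¬ ∃ i, F i = idf) ⊆
        (Fintype.piFinset fun _ : Fin n => homFinset Qbar).filter
          (fun F => ∀ i, F i ≠ idf) := by
      intro F hF
      simp only [hT, Finset.mem_filter, not_exists] at hF ⊢
      exact ⟨hF.1.1, hF.2⟩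
    have hmiss : ∑ F ∈ T.filter (fun F => ¬ ∃ i, F i = idf), ∏ i, H (F i)
        ≤ (1 - H idf) ^ n := by
      rw [← hB]
      exact Finset.sum_le_sum_of_subset_of_nonneg hsub
        (fun F _ _ => Finset.prod_nonneg fun i _ => hH0 _)
    -- numeric bound
    have hexp : (1 - H idf) ^ n ≤ Real.exp (-(ε * n)) := by
      have h1 : (1 - H idf) ^ n ≤ (1 - ε) ^ n :=
        pow_le_pow_left₀ (by linarith) (by linarith) n
      have h2 : (1 - ε) ^ n ≤ Real.exp (-ε) ^ n :=
        pow_le_pow_left₀ (by linarith) (by linarith [Real.add_one_le_exp (-ε)]) n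
      calc (1 - H idf) ^ n ≤ (1 - ε) ^ n := h1
        _ ≤ Real.exp (-ε) ^ n := h2
        _ = Real.exp (-(ε * n)) := by
            rw [← Real.exp_nat_mul]; ring_nf
    have hμC : Real.exp (-(ε * n)) < μ ^ C / C := by
      have hmono : δ ^ C ≤ μ ^ C := Real.rpow_le_rpow hδpos.le hμ (le_of_lt hC0)
      have hδC : δ ^ C = (3:ℝ) ^ C * Real.exp (-(ε * n)) := by
        rw [hδdef, Real.mul_rpow (by norm_num) (Real.exp_pos _).le, ← Real.exp_mul]
        congr 1
        field_simp
      have h3C : C < (3:ℝ) ^ C := by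
        have hlog : (1:ℝ) ≤ Real.log 3 := by
          rw [Real.le_log_iff_exp_le (by norm_num)]
          have := Real.exp_one_lt_d9
          linarith
        have hxe : C * Real.log 3 + 1 ≤ Real.exp (C * Real.log 3) :=
          Real.add_one_le_exp _
        have h3 : (3:ℝ) ^ C = Real.exp (C * Real.log 3) := by
          rw [Real.rpow_def_of_pos (by norm_num), mul_comm]
        nlinarith [mul_le_mul_of_nonneg_left hlog (le_of_lt hC0)]
      have h1 : Real.exp (-(ε * n)) < δ ^ C / C := by
        rw [hδC, lt_div_iff₀ hC0]
        nlinarith [Real.exp_pos (-(ε * (n:ℝ)))]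
      have h2 : δ ^ C / C ≤ μ ^ C / C := (div_le_div_iff_of_pos_right hC0).mpr hmono
      linarith
    have hA := hhit n S hS
    rw [← hT, ← hμdef] at hA
    have hApos : 0 < ∑ F ∈ T.filter (fun F => ∃ i, F i = idf), ∏ i, H (F i) := by
      linarith
    have hNE : (T.filter (fun F => ∃ i, F i = idf)).Nonempty := by
      rw [Finset.nonempty_iff_ne_empty]
      intro h
      rw [h, Finset.sum_empty] at hApos
      exact lt_irrefl _ hApos
    obtain ⟨F, hF⟩ := hNE
    rw [Finset.mem_filter, hT, Finset.mem_filter] at hF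
    obtain ⟨⟨hFpi, hFhit⟩, i, hFi⟩ := hF
    refine ⟨F, ?_, ⟨i, fun j => by rw [hFi]⟩, hFhit⟩
    intro i'
    have hmem := (Fintype.mem_piFinset.mp hFpi) i'
    simp only [homFinset, Finset.mem_filter, Finset.mem_univ, true_and] at hmem
    exact hmem
  have hbdd : BddBelow { ε : ℝ | IsGood Qbar n ε } := by
    refine ⟨0, fun x hx => ?_⟩
    by_contra hx0
    push_neg at hx0
    obtain ⟨f, _, _, hf3⟩ := hx (∅ : Finset (Fin n → ∀ j, Q j))
      (Finset.empty_subset _) (by simpa using hx0.le)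
    obtain ⟨q, hq⟩ := hne
    exact absurd (hf3 q hq) (Finset.notMem_empty _)
  exact csInf_le hbdd hgood
end

section
/- Let P̄ be an r-partite r-regular hypergraph that is constructible by conditioning using k doublings (and an arbitrary number of collapses), and let Q̄ be another r-partite r-regular hypergraph with M := |Q̄| hyperedges. Then there exists a probability distribution ℋ over Hom(P̄,Q̄) such that: (1) with C = 2^k, when f = (f_1,…,f_n) is sampled with each f_i i.i.d. from ℋ, for every S ⊆ Q̄^n one has Pr[∀ p̄ ∈ P̄ : (f_1(p̄),…,f_n(p̄)) ∈ S] ≥ μ(S)^C, where μ(S) = |S|/M^n; and (2) min_{f ∈ Hom(P̄,Q̄)} ℋ(f) ≥ 1/M^C with C = 2^k. -/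
/-- The class of `r`-regular `r`-partite hypergraphs (presented by per-part vertex
types `W j`, vertex sets `verts j ⊆ W j`, and a hyperedge set `edges`) that are
constructible by conditioning, together with the number of doubling steps used.

* `single`: a single hyperedge is constructible (0 doublings);
* `double`: doubling a set `old j ⊆ verts j` of old vertices (the remaining vertices
  being fixed) adds a fresh copy of every old vertex, and for every hyperedge that is
  not entirely fixed, a new hyperedge in which every old vertex is replaced by its copy;
* `collapse`: if some homomorphism of the hypergraph into the section hypergraph
  induced by `P j ⊆ verts j` is the identity on all vertices of the section, then the
  section hypergraph is constructible;
* `iso`: the class is closed under isomorphic re-presentation of a hypergraph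
  (injectively re-embedding the vertex parts). -/
inductive ConstructibleHG (r : ℕ) :
    ∀ (W : Fin r → Type), (∀ j, Set (W j)) → Set (∀ j, W j) → ℕ → Prop where
  | single (W : Fin r → Type) (e : ∀ j, W j) :
      ConstructibleHG r W (fun j => {e j}) {e} 0
  | double (W : Fin r → Type) (verts : ∀ j, Set (W j)) (edges : Set (∀ j, W j))
      (old : ∀ j, Set (W j)) (k : ℕ)
      (hold : ∀ j, old j ⊆ verts j)
      (h : ConstructibleHG r W verts edges k) :
      ConstructibleHG r (fun j => W j ⊕ W j)
        (fun j => (Sum.inl '' verts j) ∪ (Sum.inr '' old j))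
        ({ e' | ∃ e ∈ edges, ∀ j, e' j = Sum.inl (e j) } ∪
         { e' | ∃ e ∈ edges, (∃ j, e j ∈ old j) ∧
            ∀ j, (e j ∈ old j ∧ e' j = Sum.inr (e j)) ∨
                 (e j ∉ old j ∧ e' j = Sum.inl (e j)) })
        (k + 1)
  | collapse (W : Fin r → Type) (verts P : ∀ j, Set (W j)) (edges : Set (∀ j, W j))
      (k : ℕ) (f : ∀ j, W j → W j)
      (hP : ∀ j, P j ⊆ verts j)
      (hhom : ∀ e ∈ edges, (fun j => f j (e j)) ∈ { e ∈ edges | ∀ j, e j ∈ P j })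
      (hfix : ∀ j, ∀ v ∈ P j, f j v = v)
      (h : ConstructibleHG r W verts edges k) :
      ConstructibleHG r W P { e ∈ edges | ∀ j, e j ∈ P j } k
  | iso (W W' : Fin r → Type) (verts : ∀ j, Set (W j)) (edges : Set (∀ j, W j))
      (k : ℕ) (φ : ∀ j, W j → W' j)
      (hinj : ∀ j, Set.InjOn (φ j) (verts j))
      (h : ConstructibleHG r W verts edges k) :
      ConstructibleHG r W' (fun j => φ j '' verts j)
        { e' | ∃ e ∈ edges, ∀ j, e' j = φ j (e j) } k

/-- The finite set `Hom(P̄, Q̄)` of homomorphisms from the hypergraph `Pbar` to the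
hypergraph `Qbar` (tuples of maps, one per part, sending hyperedges to hyperedges). -/
def homSet {r : ℕ} {QP QQ : Fin r → Type}
    [∀ j, Fintype (QP j)] [∀ j, DecidableEq (QP j)]
    [∀ j, Fintype (QQ j)] [∀ j, DecidableEq (QQ j)]
    (Pbar : Finset (∀ j, QP j)) (Qbar : Finset (∀ j, QQ j)) :
    Finset (∀ j, QP j → QQ j) :=
  Finset.univ.filter fun f => ∀ p ∈ Pbar, (fun j => f j (p j)) ∈ Qbar


section S11Aux

open Finset

/-- Engel-form Cauchy–Schwarz for grouped sums: summing `h F · h F' / w F` over pairs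
with equal labels (and both satisfying `ev`) is at least the square of the `ev`-sum
divided by the total sum. -/
private lemma keyCS {α β : Type*} [DecidableEq β] (X : Finset α) (lab : α → β)
    (h w : α → ℝ) (ev : α → Prop) [DecidablePred ev]
    (hpos : ∀ F ∈ X, 0 < h F)
    (hw : ∀ F ∈ X, w F = ∑ F' ∈ X.filter (fun F' => lab F' = lab F), h F') :
    (∑ F ∈ X.filter ev, h F) ^ 2 / (∑ F ∈ X, h F) ≤
      ∑ FF ∈ (X ×ˢ X).filter
          (fun FF => lab FF.1 = lab FF.2 ∧ ev FF.1 ∧ ev FF.2),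
        h FF.1 * h FF.2 / w FF.1 := by
  classical
  set t := X.image lab with ht
  set A : β → ℝ := fun ℓ => ∑ F ∈ X.filter (fun F => lab F = ℓ ∧ ev F), h F with hA
  set Wl : β → ℝ := fun ℓ => ∑ F ∈ X.filter (fun F => lab F = ℓ), h F with hWl
  have hWpos : ∀ ℓ ∈ t, 0 < Wl ℓ := by
    intro ℓ hℓ
    obtain ⟨F, hF, rfl⟩ := Finset.mem_image.1 hℓ
    exact Finset.sum_pos' (fun F' hF' => (hpos F' (Finset.mem_filter.1 hF').1).le)
      ⟨F, Finset.mem_filter.2 ⟨hF, rfl⟩, hpos F hF⟩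
  have hnum : ∑ F ∈ X.filter ev, h F = ∑ ℓ ∈ t, A ℓ := by
    rw [← Finset.sum_fiberwise_of_maps_to
      (fun F hF => Finset.mem_image_of_mem lab (Finset.mem_filter.1 hF).1) h]
    refine Finset.sum_congr rfl fun ℓ _ => ?_
    rw [hA, Finset.filter_filter]
    apply Finset.sum_congr _ (fun _ _ => rfl)
    apply Finset.filter_congr
    intro F _; tauto
  have hden : ∑ F ∈ X, h F = ∑ ℓ ∈ t, Wl ℓ := by
    rw [← Finset.sum_fiberwise_of_maps_to (fun F hF => Finset.mem_image_of_mem lab hF) h]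
  have step1 : ∑ FF ∈ (X ×ˢ X).filter
          (fun FF => lab FF.1 = lab FF.2 ∧ ev FF.1 ∧ ev FF.2),
        h FF.1 * h FF.2 / w FF.1
      = ∑ F ∈ X, (if ev F then (h F / w F) * A (lab F) else 0) := by
    rw [Finset.sum_filter, Finset.sum_product]
    refine Finset.sum_congr rfl fun F hF => ?_
    by_cases hev : ev F
    · rw [if_pos hev, hA, Finset.mul_sum, Finset.sum_filter]
      refine Finset.sum_congr rfl fun F' _ => ?_
      by_cases hc : lab F' = lab F ∧ ev F'
      · rw [if_pos ⟨hc.1.symm, hev, hc.2⟩, if_pos hc]; ring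
      · rw [if_neg (fun hcon => hc ⟨hcon.1.symm, hcon.2.2⟩), if_neg hc]
    · rw [if_neg hev]
      apply Finset.sum_eq_zero
      intro F' _
      rw [if_neg]
      intro hcon; exact hev hcon.2.1
  have step2 : ∑ F ∈ X, (if ev F then (h F / w F) * A (lab F) else 0)
      = ∑ ℓ ∈ t, A ℓ ^ 2 / Wl ℓ := by
    rw [← Finset.sum_fiberwise_of_maps_to (fun F hF => Finset.mem_image_of_mem lab hF)
      (fun F => if ev F then (h F / w F) * A (lab F) else 0)]
    refine Finset.sum_congr rfl fun ℓ _ => ?_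
    have hterm : ∀ F ∈ X.filter (fun F => lab F = ℓ),
        (if ev F then (h F / w F) * A (lab F) else 0)
          = (if ev F then h F else 0) * (A ℓ / Wl ℓ) := by
      intro F hF
      obtain ⟨hFX, hlab⟩ := Finset.mem_filter.1 hF
      by_cases hev : ev F
      · rw [if_pos hev, if_pos hev, hlab, hw F hFX]
        have : (∑ F' ∈ X.filter (fun F' => lab F' = lab F), h F') = Wl ℓ := by
          rw [hWl, hlab]
        rw [this]
        ring
      · rw [if_neg hev, if_neg hev, zero_mul]
    rw [Finset.sum_congr rfl hterm, ← Finset.sum_mul, ← Finset.sum_filter,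
      Finset.filter_filter]
    have hAl : (∑ a ∈ X.filter (fun a => lab a = ℓ ∧ ev a), h a) = A ℓ := rfl
    rw [hAl, sq, mul_div_assoc]
  rw [hnum, hden, step1, step2]
  exact Finset.sq_sum_div_le_sum_sq_div t A hWpos

/-- Basic structural facts about constructible hypergraphs: all parts are nonempty
types and every hyperedge has all its vertices in the vertex sets. -/
private lemma ConstructibleHG.invar {r : ℕ} {W : Fin r → Type} {verts : ∀ j, Set (W j)}
    {edges : Set (∀ j, W j)} {k : ℕ} (h : ConstructibleHG r W verts edges k) :
    (∀ j, Nonempty (W j)) ∧ ∀ e ∈ edges, ∀ j, e j ∈ verts j := by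
  induction h with
  | single W e =>
      refine ⟨fun j => ⟨e j⟩, ?_⟩
      rintro e' he' j
      rw [Set.mem_singleton_iff] at he'
      subst he'
      exact Set.mem_singleton _
  | double W verts edges old k hold h ih =>
      refine ⟨fun j => ⟨Sum.inl (ih.1 j).some⟩, ?_⟩
      rintro e' (⟨e, he, hco⟩ | ⟨e, he, _, hco⟩) j
      · rw [hco j]
        exact Or.inl ⟨e j, ih.2 e he j, rfl⟩
      · rcases hco j with ⟨hm, hco⟩ | ⟨hm, hco⟩
        · rw [hco]
          exact Or.inr ⟨e j, hm, rfl⟩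
        · rw [hco]
          exact Or.inl ⟨e j, ih.2 e he j, rfl⟩
  | collapse W verts P edges k f hP hhom hfix h ih =>
      exact ⟨ih.1, fun e he j => he.2 j⟩
  | iso W W' verts edges k φ hinj h ih =>
      refine ⟨fun j => ⟨φ j (ih.1 j).some⟩, ?_⟩
      rintro e' ⟨e, he, hco⟩ j
      rw [hco j]
      exact ⟨e j, ih.2 e he j, rfl⟩

open Classical in
/-- The inductive statement: a distribution (`T`, `H`) over homomorphisms from the
constructible hypergraph to `Q̄` with the key sampling and min-probability properties. -/
private def Good {r : ℕ} (QQ : Fin r → Type) [∀ j, Fintype (QQ j)] [∀ j, DecidableEq (QQ j)]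
    (Qbar : Finset (∀ j, QQ j)) (M : ℕ)
    (W : Fin r → Type) (verts : ∀ j, Set (W j)) (edges : Set (∀ j, W j)) (k : ℕ) : Prop :=
  ∃ (T : Finset (∀ j, W j → QQ j)) (H : (∀ j, W j → QQ j) → ℝ),
    (∀ f ∈ T, 0 < H f) ∧
    (∀ f ∈ T, ∀ e ∈ edges, (fun j => f j (e j)) ∈ Qbar) ∧
    (∑ f ∈ T, H f = 1) ∧
    (∀ (n : ℕ) (S : Finset (Fin n → ∀ j, QQ j)),
      S ⊆ Fintype.piFinset (fun _ => Qbar) →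
      ((S.card : ℝ) / (M : ℝ) ^ n) ^ (2 ^ k : ℕ) ≤
        ∑ F ∈ Fintype.piFinset (fun _ : Fin n => T),
          (if ∀ p ∈ edges, (fun i j => F i j (p j)) ∈ S then ∏ i, H (F i) else 0)) ∧
    (∀ g : ∀ j, W j → QQ j, (∀ e ∈ edges, (fun j => g j (e j)) ∈ Qbar) →
      ∃ f ∈ T, (1 / (M : ℝ) ^ (2 ^ k : ℕ) ≤ H f) ∧ ∀ j, ∀ v ∈ verts j, f j v = g j v)

set_option maxHeartbeats 2000000 in
private lemma good_of_constructible {r : ℕ} (QQ : Fin r → Type)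
    [∀ j, Fintype (QQ j)] [∀ j, DecidableEq (QQ j)]
    (Qbar : Finset (∀ j, QQ j)) (M : ℕ) (hQne : Qbar.Nonempty) (hM : M = Qbar.card)
    {W : Fin r → Type} {verts : ∀ j, Set (W j)} {edges : Set (∀ j, W j)} {k : ℕ}
    (h : ConstructibleHG r W verts edges k) :
    Good QQ Qbar M W verts edges k := by
  classical
  have hM0 : 0 < M := by rw [hM]; exact Finset.card_pos.2 hQne
  induction h with
  | single W e =>
      refine ⟨Qbar.image (fun q => fun j (_ : W j) => q j), fun _ => 1 / (M : ℝ),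
        ?_, ?_, ?_, ?_, ?_⟩
      · intro f _
        rw [one_div]
        exact inv_pos.2 (by exact_mod_cast hM0)
      · rintro f hf e' he'
        obtain ⟨q, hq, rfl⟩ := Finset.mem_image.1 hf
        simpa using hq
      · have hinj : Function.Injective (fun (q : ∀ j, QQ j) => fun j (_ : W j) => q j) := by
          intro q q' hqq
          funext j
          exact congrFun (congrFun hqq j) (e j)
        rw [Finset.sum_const, Finset.card_image_of_injective _ hinj, ← hM, nsmul_eq_mul]
        rw [mul_one_div, div_self (by exact_mod_cast hM0.ne')]
      · intro n S hS
        have hprod : ∀ F : Fin n → ∀ j, W j → QQ j, (∏ _i : Fin n, (1 : ℝ) / (M : ℝ))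
            = 1 / (M : ℝ) ^ n := by
          intro F
          rw [Finset.prod_const, Finset.card_univ, Fintype.card_fin, one_div, one_div, inv_pow]
        have hcard : S.card ≤ ((Fintype.piFinset fun _ : Fin n =>
            Qbar.image (fun q => fun j (_ : W j) => q j)).filter
            (fun F => ∀ p ∈ ({e} : Set (∀ j, W j)), (fun i j => F i j (p j)) ∈ S)).card := by
          apply Finset.card_le_card_of_injOn (fun s => fun i => fun j (_ : W j) => s i j)
          · intro s hs
            rw [Finset.mem_coe, Finset.mem_filter]
            constructor
            · rw [Fintype.mem_piFinset]
              intro i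
              exact Finset.mem_image_of_mem _ ((Fintype.mem_piFinset).1 (hS hs) i)
            · rintro p hp
              rw [Set.mem_singleton_iff] at hp
              subst hp
              simpa using hs
          · intro s _ s' _ hss
            funext i j
            exact congrFun (congrFun (congrFun hss i) j) (e j)
        calc ((S.card : ℝ) / (M : ℝ) ^ n) ^ (2 ^ 0 : ℕ)
            = (S.card : ℝ) * (1 / (M : ℝ) ^ n) := by
              rw [pow_zero, pow_one, div_eq_mul_one_div]
          _ ≤ _ := by
              rw [← Finset.sum_filter, Finset.sum_const, nsmul_eq_mul,
                Finset.prod_const, Finset.card_univ, Fintype.card_fin,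
                one_div, one_div, inv_pow]
              apply mul_le_mul_of_nonneg_right _ (by positivity)
              exact_mod_cast hcard
      · intro g hg
        have hq : (fun j => g j (e j)) ∈ Qbar := hg e rfl
        refine ⟨fun j (_ : W j) => g j (e j), Finset.mem_image_of_mem _ hq, ?_, ?_⟩
        · rw [pow_zero, pow_one]
        · intro j v hv
          rw [Set.mem_singleton_iff] at hv
          subst hv
          rfl
  | double W verts edges old k hold h ih =>
      obtain ⟨T, H, h1, h2, h3, h4, h5⟩ := ih
      have hinv := h.invar
      set cmb : (∀ j, W j → QQ j) → (∀ j, W j → QQ j) → (∀ j, W j ⊕ W j → QQ j) :=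
        fun f f' => fun j => Sum.elim (f j) (f' j) with hcmb
      set lab : (∀ j, W j → QQ j) → (∀ j, W j → Option (QQ j)) :=
        fun f => fun j v => if v ∈ verts j ∧ v ∉ old j then some (f j v) else none with hlab
      have hlabR : ∀ f f' : ∀ j, W j → QQ j, lab f = lab f' →
          ∀ j, ∀ v ∈ verts j, v ∉ old j → f j v = f' j v := by
        intro f f' hff j v hv hvo
        have hvv := congrFun (congrFun hff j) v
        rw [hlab] at hvv
        simp only [if_pos (show v ∈ verts j ∧ v ∉ old j from ⟨hv, hvo⟩)] at hvv
        exact Option.some.inj hvv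
      have hRlab : ∀ f f' : ∀ j, W j → QQ j,
          (∀ j, ∀ v ∈ verts j, v ∉ old j → f j v = f' j v) → lab f = lab f' := by
        intro f f' hR
        funext j v
        rw [hlab]
        by_cases hc : v ∈ verts j ∧ v ∉ old j
        · simp only [if_pos hc, hR j v hc.1 hc.2]
        · simp only [if_neg hc]
      set w : (∀ j, W j → QQ j) → ℝ :=
        fun f => ∑ f' ∈ T.filter (fun f' => lab f' = lab f), H f' with hwdef
      have hwpos : ∀ f ∈ T, 0 < w f := fun f hf =>
        Finset.sum_pos' (fun f' hf' => (h1 f' (Finset.mem_filter.1 hf').1).le)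
          ⟨f, Finset.mem_filter.2 ⟨hf, rfl⟩, h1 f hf⟩
      have hwle : ∀ f ∈ T, w f ≤ 1 := by
        intro f hf
        rw [← h3]
        exact Finset.sum_le_sum_of_subset_of_nonneg (Finset.filter_subset _ _)
          (fun f' hf' _ => (h1 f' hf').le)
      have hcinj : Function.Injective
          (fun p : (∀ j, W j → QQ j) × (∀ j, W j → QQ j) => cmb p.1 p.2) := by
        intro p p' hpp
        exact Prod.ext
          (funext fun j => funext fun v => congrFun (congrFun hpp j) (Sum.inl v))
          (funext fun j => funext fun v => congrFun (congrFun hpp j) (Sum.inr v))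
      refine ⟨((T ×ˢ T).filter (fun p => lab p.1 = lab p.2)).image (fun p => cmb p.1 p.2),
        fun g => H (fun j v => g j (Sum.inl v)) * H (fun j v => g j (Sum.inr v)) /
          w (fun j v => g j (Sum.inl v)),
        ?_, ?_, ?_, ?_, ?_⟩
      · intro g hg
        obtain ⟨p, hp, rfl⟩ := Finset.mem_image.1 hg
        obtain ⟨hpT, -⟩ := Finset.mem_filter.1 hp
        obtain ⟨hp1, hp2⟩ := Finset.mem_product.1 hpT
        show 0 < H p.1 * H p.2 / w p.1
        exact div_pos (mul_pos (h1 p.1 hp1) (h1 p.2 hp2)) (hwpos p.1 hp1)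
      · rintro g hg e' he'
        obtain ⟨p, hp, rfl⟩ := Finset.mem_image.1 hg
        obtain ⟨hpT, hpl⟩ := Finset.mem_filter.1 hp
        obtain ⟨hp1, hp2⟩ := Finset.mem_product.1 hpT
        rcases he' with ⟨e, he, hco⟩ | ⟨e, he, -, hco⟩
        · have heq : (fun j => cmb p.1 p.2 j (e' j)) = fun j => p.1 j (e j) := by
            funext j; rw [hco j]; rfl
          rw [heq]
          exact h2 p.1 hp1 e he
        · have heq : (fun j => cmb p.1 p.2 j (e' j)) = fun j => p.2 j (e j) := by
            funext j
            rcases hco j with ⟨hm, hc⟩ | ⟨hm, hc⟩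
            · rw [hc]; rfl
            · rw [hc]
              show p.1 j (e j) = p.2 j (e j)
              exact hlabR p.1 p.2 hpl j (e j) (hinv.2 e he j) hm
          rw [heq]
          exact h2 p.2 hp2 e he
      · have himg : ∑ g ∈ ((T ×ˢ T).filter (fun p => lab p.1 = lab p.2)).image
              (fun p => cmb p.1 p.2),
            (H (fun j v => g j (Sum.inl v)) * H (fun j v => g j (Sum.inr v)) /
              w (fun j v => g j (Sum.inl v)))
            = ∑ p ∈ (T ×ˢ T).filter (fun p => lab p.1 = lab p.2), H p.1 * H p.2 / w p.1 := by
          rw [Finset.sum_image (fun p _ p' _ hpp => hcinj hpp)]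
          exact Finset.sum_congr rfl fun p _ => rfl
        rw [himg, Finset.sum_filter, Finset.sum_product]
        have hrow : ∀ f ∈ T,
            (∑ f' ∈ T, if lab f = lab f' then H f * H f' / w f else 0) = H f := by
          intro f hf
          have hterm : ∀ f' ∈ T, (if lab f = lab f' then H f * H f' / w f else 0)
              = (H f / w f) * (if lab f' = lab f then H f' else 0) := by
            intro f' _
            by_cases hc : lab f' = lab f
            · rw [if_pos hc.symm, if_pos hc]; ring
            · rw [if_neg (fun hx => hc hx.symm), if_neg hc, mul_zero]
          rw [Finset.sum_congr rfl hterm, ← Finset.mul_sum, ← Finset.sum_filter]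
          have hwf : (∑ f' ∈ T.filter (fun f' => lab f' = lab f), H f') = w f := rfl
          rw [hwf]
          exact div_mul_cancel₀ (H f) (hwpos f hf).ne'
        rw [Finset.sum_congr rfl hrow]
        exact h3
      · intro n S hS
        set X := Fintype.piFinset (fun _ : Fin n => T) with hX
        have hXsum : ∑ F ∈ X, ∏ i, H (F i) = 1 := by
          rw [hX, ← Finset.prod_univ_sum]
          simp [h3]
        have hwn_eq : ∀ F ∈ X, (∏ i, w (F i)) =
            ∑ F' ∈ X.filter (fun F' => (fun i => lab (F' i)) = (fun i => lab (F i))),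
              ∏ i, H (F' i) := by
          intro F _
          rw [show (∏ i, w (F i))
              = ∏ i, ∑ f' ∈ T.filter (fun f' => lab f' = lab (F i)), H f' from rfl,
            Finset.prod_univ_sum]
          apply Finset.sum_congr _ (fun _ _ => rfl)
          ext F'
          simp only [Fintype.mem_piFinset, Finset.mem_filter, funext_iff, forall_and, hX]
        have hkey := keyCS X (fun F => fun i => lab (F i)) (fun F => ∏ i, H (F i))
          (fun F => ∏ i, w (F i)) (fun F => ∀ p ∈ edges, (fun i j => F i j (p j)) ∈ S)
          (fun F hF => Finset.prod_pos fun i _ => h1 _ (Fintype.mem_piFinset.1 hF i))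
          hwn_eq
        rw [hXsum, div_one] at hkey
        have hpair_ev : ∀ FF : (Fin n → ∀ j, W j → QQ j) × (Fin n → ∀ j, W j → QQ j),
            ((fun i => lab (FF.1 i)) = fun i => lab (FF.2 i)) →
            (∀ p ∈ edges, (fun i j => FF.1 i j (p j)) ∈ S) →
            (∀ p ∈ edges, (fun i j => FF.2 i j (p j)) ∈ S) →
            ∀ p ∈ ({ e' : ∀ j, W j ⊕ W j | ∃ e ∈ edges, ∀ j, e' j = Sum.inl (e j) } ∪
              { e' : ∀ j, W j ⊕ W j | ∃ e ∈ edges, (∃ j, e j ∈ old j) ∧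
                ∀ j, (e j ∈ old j ∧ e' j = Sum.inr (e j)) ∨
                  (e j ∉ old j ∧ e' j = Sum.inl (e j)) }),
              (fun i j => cmb (FF.1 i) (FF.2 i) j (p j)) ∈ S := by
          rintro ⟨F, F'⟩ hl hev hev' p hp
          rcases hp with ⟨e, he, hco⟩ | ⟨e, he, -, hco⟩
          · have heq : (fun i j => cmb (F i) (F' i) j (p j)) = fun i j => F i j (e j) := by
              funext i j; rw [hco j]; rfl
            rw [heq]; exact hev e he
          · have heq : (fun i j => cmb (F i) (F' i) j (p j)) = fun i j => F' i j (e j) := by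
              funext i j
              rcases hco j with ⟨hm, hc⟩ | ⟨hm, hc⟩
              · rw [hc]; rfl
              · rw [hc]
                show F i j (e j) = F' i j (e j)
                exact hlabR (F i) (F' i) (congrFun hl i) j (e j) (hinv.2 e he j) hm
            rw [heq]; exact hev' e he
        set Dn := (X ×ˢ X).filter (fun FF =>
          ((fun i => lab (FF.1 i)) = fun i => lab (FF.2 i)) ∧
          (∀ p ∈ edges, (fun i j => FF.1 i j (p j)) ∈ S) ∧
          (∀ p ∈ edges, (fun i j => FF.2 i j (p j)) ∈ S)) with hDn
        have hΦinj : ∀ FF ∈ Dn, ∀ FF' ∈ Dn,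
            (fun i => cmb (FF.1 i) (FF.2 i)) = (fun i => cmb (FF'.1 i) (FF'.2 i)) →
            FF = FF' := by
          intro FF _ FF' _ hEq
          have hp : ∀ i, (FF.1 i, FF.2 i) = (FF'.1 i, FF'.2 i) :=
            fun i => hcinj (congrFun hEq i)
          exact Prod.ext (funext fun i => congrArg Prod.fst (hp i))
            (funext fun i => congrArg Prod.snd (hp i))
        have himgsub : Dn.image (fun FF => fun i => cmb (FF.1 i) (FF.2 i)) ⊆
            Fintype.piFinset (fun _ : Fin n =>
              ((T ×ˢ T).filter (fun p => lab p.1 = lab p.2)).image (fun p => cmb p.1 p.2)) := by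
          intro G hG
          obtain ⟨FF, hFF, rfl⟩ := Finset.mem_image.1 hG
          obtain ⟨hFFX, hFFl, -, -⟩ := Finset.mem_filter.1 hFF
          obtain ⟨hF1, hF2⟩ := Finset.mem_product.1 hFFX
          rw [Fintype.mem_piFinset]
          intro i
          exact Finset.mem_image.2 ⟨(FF.1 i, FF.2 i), Finset.mem_filter.2
            ⟨Finset.mem_product.2 ⟨Fintype.mem_piFinset.1 hF1 i, Fintype.mem_piFinset.1 hF2 i⟩,
             congrFun hFFl i⟩, rfl⟩
        calc ((S.card : ℝ) / (M : ℝ) ^ n) ^ (2 ^ (k + 1) : ℕ)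
            = (((S.card : ℝ) / (M : ℝ) ^ n) ^ (2 ^ k : ℕ)) ^ 2 := by
              rw [← pow_mul, pow_succ]
          _ ≤ (∑ F ∈ X.filter (fun F => ∀ p ∈ edges, (fun i j => F i j (p j)) ∈ S),
                ∏ i, H (F i)) ^ 2 := by
              apply pow_le_pow_left₀ (pow_nonneg (div_nonneg (Nat.cast_nonneg _)
                (pow_nonneg (Nat.cast_nonneg _) _)) _)
              rw [Finset.sum_filter]
              exact h4 n S hS
          _ ≤ ∑ FF ∈ Dn, (∏ i, H (FF.1 i)) * (∏ i, H (FF.2 i)) / ∏ i, w (FF.1 i) := hkey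
          _ = ∑ G ∈ Dn.image (fun FF => fun i => cmb (FF.1 i) (FF.2 i)),
                (if ∀ p ∈ ({ e' : ∀ j, W j ⊕ W j | ∃ e ∈ edges, ∀ j, e' j = Sum.inl (e j) } ∪
                    { e' : ∀ j, W j ⊕ W j | ∃ e ∈ edges, (∃ j, e j ∈ old j) ∧
                      ∀ j, (e j ∈ old j ∧ e' j = Sum.inr (e j)) ∨
                        (e j ∉ old j ∧ e' j = Sum.inl (e j)) }),
                    (fun i j => G i j (p j)) ∈ S
                  then ∏ i, (H (fun j v => G i j (Sum.inl v)) * H (fun j v => G i j (Sum.inr v)) /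
                    w (fun j v => G i j (Sum.inl v))) else 0) := by
              rw [Finset.sum_image hΦinj]
              refine Finset.sum_congr rfl fun FF hFF => ?_
              obtain ⟨-, hFFl, hFFe1, hFFe2⟩ := Finset.mem_filter.1 hFF
              rw [if_pos (hpair_ev FF hFFl hFFe1 hFFe2)]
              have hterm : ∀ i : Fin n,
                  (H (fun j v => cmb (FF.1 i) (FF.2 i) j (Sum.inl v)) *
                    H (fun j v => cmb (FF.1 i) (FF.2 i) j (Sum.inr v)) /
                    w (fun j v => cmb (FF.1 i) (FF.2 i) j (Sum.inl v)))
                  = H (FF.1 i) * H (FF.2 i) / w (FF.1 i) := fun i => rfl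
              rw [Finset.prod_congr rfl (fun i _ => hterm i), Finset.prod_div_distrib,
                Finset.prod_mul_distrib]
          _ ≤ _ := by
              apply Finset.sum_le_sum_of_subset_of_nonneg himgsub
              intro G hG _
              split_ifs
              · refine Finset.prod_nonneg fun i _ => ?_
                have hGi := Fintype.mem_piFinset.1 hG i
                obtain ⟨p, hp, hpe⟩ := Finset.mem_image.1 hGi
                obtain ⟨hpT, -⟩ := Finset.mem_filter.1 hp
                obtain ⟨hp1, hp2⟩ := Finset.mem_product.1 hpT
                rw [← hpe]
                exact le_of_lt (show (0:ℝ) < H p.1 * H p.2 / w p.1 from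
                  div_pos (mul_pos (h1 p.1 hp1) (h1 p.2 hp2)) (hwpos p.1 hp1))
              · exact le_refl _
      · intro g' hg'
        set gL : ∀ j, W j → QQ j := fun j v => g' j (Sum.inl v) with hgL
        set gR : ∀ j, W j → QQ j := fun j v =>
          if v ∈ old j then g' j (Sum.inr v) else g' j (Sum.inl v) with hgR
        have hgLhom : ∀ e ∈ edges, (fun j => gL j (e j)) ∈ Qbar := by
          intro e he
          exact hg' (fun j => Sum.inl (e j)) (Or.inl ⟨e, he, fun j => rfl⟩)
        have hgRhom : ∀ e ∈ edges, (fun j => gR j (e j)) ∈ Qbar := by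
          intro e he
          by_cases hc : ∃ j, e j ∈ old j
          · have hmem := hg' (fun j => if e j ∈ old j then Sum.inr (e j) else Sum.inl (e j))
              (Or.inr ⟨e, he, hc, fun j => by
                by_cases hj : e j ∈ old j
                · exact Or.inl ⟨hj, if_pos hj⟩
                · exact Or.inr ⟨hj, if_neg hj⟩⟩)
            have heq : (fun j => gR j (e j))
                = fun j => g' j (if e j ∈ old j then Sum.inr (e j) else Sum.inl (e j)) := by
              funext j
              by_cases hj : e j ∈ old j
              · rw [hgR]; simp only [if_pos hj]
              · rw [hgR]; simp only [if_neg hj]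
            rw [heq]
            exact hmem
          · have heq : (fun j => gR j (e j)) = fun j => gL j (e j) := by
              funext j
              have hj : ¬ e j ∈ old j := fun hj => hc ⟨j, hj⟩
              rw [hgR]; simp only [if_neg hj]; rfl
            rw [heq]
            exact hgLhom e he
        obtain ⟨f, hfT, hfb, hfa⟩ := h5 gL hgLhom
        obtain ⟨f', hf'T, hf'b, hf'a⟩ := h5 gR hgRhom
        have hlabeq : lab f = lab f' := hRlab f f' (by
          intro j v hv hvo
          rw [hfa j v hv, hf'a j v hv, hgL, hgR]
          simp only [if_neg hvo])
        refine ⟨cmb f f', Finset.mem_image.2 ⟨(f, f'), Finset.mem_filter.2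
          ⟨Finset.mem_product.2 ⟨hfT, hf'T⟩, hlabeq⟩, rfl⟩, ?_, ?_⟩
        · show 1 / (M : ℝ) ^ (2 ^ (k + 1) : ℕ) ≤ H f * H f' / w f
          have hb : 1 / (M : ℝ) ^ (2 ^ k : ℕ) * (1 / (M : ℝ) ^ (2 ^ k : ℕ)) ≤ H f * H f' :=
            mul_le_mul hfb hf'b (by positivity) (le_trans (by positivity) hfb)
          calc 1 / (M : ℝ) ^ (2 ^ (k + 1) : ℕ)
              = 1 / (M : ℝ) ^ (2 ^ k : ℕ) * (1 / (M : ℝ) ^ (2 ^ k : ℕ)) := by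
                rw [div_mul_div_comm, one_mul, ← pow_add, pow_succ, mul_two]
            _ ≤ H f * H f' := hb
            _ ≤ H f * H f' / w f := by
                rw [le_div_iff₀ (hwpos f hfT)]
                exact mul_le_of_le_one_right (le_trans (by positivity) hb) (hwle f hfT)
        · rintro j x (⟨v, hv, rfl⟩ | ⟨v, hv, rfl⟩)
          · show f j v = g' j (Sum.inl v)
            rw [hfa j v hv]
          · show f' j v = g' j (Sum.inr v)
            rw [hf'a j v (hold j hv), hgR]
            simp only [if_pos hv]
  | collapse W verts P edges k σ hP hhom hfix h ih =>
      obtain ⟨T, H, h1, h2, h3, h4, h5⟩ := ih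
      refine ⟨T, H, h1, ?_, h3, ?_, ?_⟩
      · intro f hf e he
        exact h2 f hf e he.1
      · intro n S hS
        refine le_trans (h4 n S hS) (Finset.sum_le_sum ?_)
        intro F hF
        by_cases hc : ∀ p ∈ edges, (fun i j => F i j (p j)) ∈ S
        · rw [if_pos hc, if_pos (fun p hp => hc p hp.1)]
        · rw [if_neg hc]
          split_ifs
          · exact Finset.prod_nonneg fun i _ => (h1 (F i) (Fintype.mem_piFinset.1 hF i)).le
          · exact le_refl _
      · intro g hg
        obtain ⟨f, hfT, hfb, hfa⟩ := h5 (fun j v => g j (σ j v)) (fun e he => hg _ (hhom e he))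
        exact ⟨f, hfT, hfb, fun j v hv => by rw [hfa j v (hP j hv), hfix j v hv]⟩
  | iso W W' verts edges k φ hinj h ih =>
      obtain ⟨T, H, h1, h2, h3, h4, h5⟩ := ih
      have hinv := h.invar
      set ψ : ∀ j, W' j → W j := fun j x =>
        if hx : ∃ v ∈ verts j, φ j v = x then hx.choose else (hinv.1 j).some with hψ
      have hψφ : ∀ j, ∀ v ∈ verts j, ψ j (φ j v) = v := by
        intro j v hv
        have hx : ∃ v' ∈ verts j, φ j v' = φ j v := ⟨v, hv, rfl⟩
        rw [hψ]
        simp only [dif_pos hx]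
        exact hinj j hx.choose_spec.1 hv hx.choose_spec.2
      set push : (∀ j, W j → QQ j) → (∀ j, W' j → QQ j) :=
        fun f => fun j x => f j (ψ j x) with hpush
      refine ⟨T.image push, fun g => ∑ f ∈ T.filter (fun f => push f = g), H f,
        ?_, ?_, ?_, ?_, ?_⟩
      · intro g hg
        obtain ⟨f0, hf0, rfl⟩ := Finset.mem_image.1 hg
        exact Finset.sum_pos' (fun f' hf' => (h1 f' (Finset.mem_filter.1 hf').1).le)
          ⟨f0, Finset.mem_filter.2 ⟨hf0, rfl⟩, h1 f0 hf0⟩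
      · rintro g hg e' ⟨e, he, hco⟩
        obtain ⟨f, hf, rfl⟩ := Finset.mem_image.1 hg
        have : (fun j => push f j (e' j)) = fun j => f j (e j) := by
          funext j
          rw [hco j]
          show f j (ψ j (φ j (e j))) = f j (e j)
          rw [hψφ j (e j) (hinv.2 e he j)]
        rw [this]
        exact h2 f hf e he
      · rw [Finset.sum_fiberwise_of_maps_to (fun f hf => Finset.mem_image_of_mem push hf) H]
        exact h3
      · intro n S hS
        have hfib : ∀ G : Fin n → ∀ j, W' j → QQ j,
            (∏ i, ∑ f ∈ T.filter (fun f => push f = G i), H f)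
              = ∑ F ∈ (Fintype.piFinset fun _ : Fin n => T).filter
                  (fun F => (fun i => push (F i)) = G), ∏ i, H (F i) := by
          intro G
          rw [Finset.prod_univ_sum]
          apply Finset.sum_congr _ (fun _ _ => rfl)
          ext F
          simp only [Fintype.mem_piFinset, Finset.mem_filter, funext_iff, forall_and]
        have hmaps : ∀ F ∈ (Fintype.piFinset fun _ : Fin n => T),
            (fun i => push (F i)) ∈ (Fintype.piFinset fun _ : Fin n => T.image push) := by
          intro F hF
          rw [Fintype.mem_piFinset]
          exact fun i => Finset.mem_image_of_mem push (Fintype.mem_piFinset.1 hF i)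
        have himp : ∀ F ∈ (Fintype.piFinset fun _ : Fin n => T),
            (∀ p ∈ edges, (fun i j => F i j (p j)) ∈ S) →
            (∀ p ∈ { e' : ∀ j, W' j | ∃ e ∈ edges, ∀ j, e' j = φ j (e j) },
              (fun i j => push (F i) j (p j)) ∈ S) := by
          rintro F _ hev p ⟨e, he, hco⟩
          have : (fun i j => push (F i) j (p j)) = fun i j => F i j (e j) := by
            funext i j
            rw [hco j]
            show F i j (ψ j (φ j (e j))) = F i j (e j)
            rw [hψφ j (e j) (hinv.2 e he j)]
          rw [this]
          exact hev e he
        calc ((S.card : ℝ) / (M : ℝ) ^ n) ^ (2 ^ k : ℕ)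
            ≤ ∑ F ∈ Fintype.piFinset (fun _ : Fin n => T),
                (if ∀ p ∈ edges, (fun i j => F i j (p j)) ∈ S then ∏ i, H (F i) else 0) :=
              h4 n S hS
          _ ≤ ∑ F ∈ Fintype.piFinset (fun _ : Fin n => T),
                (if ∀ p ∈ { e' : ∀ j, W' j | ∃ e ∈ edges, ∀ j, e' j = φ j (e j) },
                    (fun i j => push (F i) j (p j)) ∈ S then ∏ i, H (F i) else 0) := by
              apply Finset.sum_le_sum
              intro F hF
              by_cases hc : ∀ p ∈ edges, (fun i j => F i j (p j)) ∈ S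
              · rw [if_pos hc, if_pos (himp F hF hc)]
              · rw [if_neg hc]
                split_ifs
                · exact Finset.prod_nonneg fun i _ =>
                    (h1 (F i) (Fintype.mem_piFinset.1 hF i)).le
                · exact le_refl _
          _ = _ := by
              rw [← Finset.sum_fiberwise_of_maps_to hmaps
                (fun F => if ∀ p ∈ { e' : ∀ j, W' j | ∃ e ∈ edges, ∀ j, e' j = φ j (e j) },
                    (fun i j => push (F i) j (p j)) ∈ S then ∏ i, H (F i) else 0)]
              refine Finset.sum_congr rfl fun G _ => ?_
              rw [hfib G]
              by_cases hc : ∀ p ∈ { e' : ∀ j, W' j | ∃ e ∈ edges, ∀ j, e' j = φ j (e j) },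
                  (fun i j => G i j (p j)) ∈ S
              · rw [if_pos hc]
                refine Finset.sum_congr rfl fun F hF => ?_
                obtain ⟨-, hFG⟩ := Finset.mem_filter.1 hF
                subst hFG
                exact if_pos hc
              · rw [if_neg hc]
                apply Finset.sum_eq_zero
                intro F hF
                obtain ⟨-, hFG⟩ := Finset.mem_filter.1 hF
                subst hFG
                exact if_neg hc
      · intro g' hg'
        obtain ⟨f, hfT, hfb, hfa⟩ := h5 (fun j v => g' j (φ j v))
          (fun e he => hg' (fun j => φ j (e j)) ⟨e, he, fun j => rfl⟩)
        refine ⟨push f, Finset.mem_image_of_mem push hfT, ?_, ?_⟩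
        · refine le_trans hfb (Finset.single_le_sum
            (fun f' hf' => (h1 f' (Finset.mem_filter.1 hf').1).le)
            (Finset.mem_filter.2 ⟨hfT, rfl⟩))
        · rintro j x ⟨v, hv, rfl⟩
          show f j (ψ j (φ j v)) = g' j (φ j v)
          rw [hψφ j v hv]
          exact hfa j v hv

end S11Aux

/-- If `P̄` is constructible by conditioning using `k` doublings and `Q̄` is another
`r`-partite `r`-regular hypergraph with `M` hyperedges, then there is a probability
distribution `H` on `Hom(P̄,Q̄)` such that (with `C = 2^k`): an i.i.d. `H`-vector
`(f_1,…,f_n)` maps all hyperedges of `P̄` simultaneously into any given `S ⊆ Q̄ⁿ` with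
probability at least `μ(S)^C`, and every homomorphism has probability at least `1/M^C`. -/
theorem statement11 (r k : ℕ)
    (QP : Fin r → Type) [∀ j, Fintype (QP j)] [∀ j, DecidableEq (QP j)]
    (Pbar : Finset (∀ j, QP j))
    (hcon : ConstructibleHG r QP (fun _ => Set.univ) (↑Pbar) k)
    (QQ : Fin r → Type) [∀ j, Fintype (QQ j)] [∀ j, DecidableEq (QQ j)]
    (Qbar : Finset (∀ j, QQ j)) (hQne : Qbar.Nonempty)
    (M : ℕ) (hM : M = Qbar.card) :
    ∃ H : (∀ j, QP j → QQ j) → ℝ,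
      (∀ f, 0 ≤ H f) ∧
      (∀ f ∉ homSet Pbar Qbar, H f = 0) ∧
      (∑ f ∈ homSet Pbar Qbar, H f = 1) ∧
      (∀ (n : ℕ) (S : Finset (Fin n → ∀ j, QQ j)),
        S ⊆ Fintype.piFinset (fun _ => Qbar) →
        ((S.card : ℝ) / (M : ℝ) ^ n) ^ (2 ^ k : ℕ) ≤
          ∑ F ∈ (Fintype.piFinset fun _ : Fin n => homSet Pbar Qbar).filter
              (fun F => ∀ p ∈ Pbar, (fun i j => F i j (p j)) ∈ S),
            ∏ i, H (F i)) ∧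
      (∀ f ∈ homSet Pbar Qbar, 1 / (M : ℝ) ^ (2 ^ k : ℕ) ≤ H f) := by
  classical
  obtain ⟨T, H, h1, h2, h3, h4, h5⟩ := good_of_constructible QQ Qbar M hQne hM hcon
  have hTsub : T ⊆ homSet Pbar Qbar := by
    intro f hf
    rw [homSet, Finset.mem_filter]
    exact ⟨Finset.mem_univ f, fun p hp => h2 f hf p (Finset.mem_coe.2 hp)⟩
  have hTsup : ∀ f ∈ homSet Pbar Qbar, f ∈ T ∧ 1 / (M : ℝ) ^ (2 ^ k : ℕ) ≤ H f := by
    intro f hf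
    rw [homSet, Finset.mem_filter] at hf
    obtain ⟨f0, hf0T, hf0b, hf0a⟩ := h5 f (fun e he => hf.2 e (Finset.mem_coe.1 he))
    have hff : f0 = f := funext fun j => funext fun v => hf0a j v (Set.mem_univ v)
    exact ⟨hff ▸ hf0T, hff ▸ hf0b⟩
  have hTeq : T = homSet Pbar Qbar :=
    Finset.Subset.antisymm hTsub (fun f hf => (hTsup f hf).1)
  refine ⟨fun f => if f ∈ T then H f else 0, ?_, ?_, ?_, ?_, ?_⟩
  · intro f
    show (0:ℝ) ≤ if f ∈ T then H f else 0
    split_ifs with hf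
    · exact (h1 f hf).le
    · exact le_refl _
  · intro f hf
    show (if f ∈ T then H f else 0) = 0
    rw [if_neg (fun hfT => hf (hTsub hfT))]
  · rw [← hTeq, Finset.sum_congr rfl (fun f hf => if_pos hf)]
    exact h3
  · intro n S hS
    refine le_trans (h4 n S hS) ?_
    rw [Finset.sum_filter]
    apply le_of_eq
    apply Finset.sum_congr
    · apply Finset.ext
      intro F
      simp only [Fintype.mem_piFinset, hTeq]
    · intro F hF
      have hFT : ∀ i, F i ∈ T := by
        intro i
        rw [hTeq]
        exact Fintype.mem_piFinset.1 hF i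
      by_cases hc : ∀ p ∈ Pbar, (fun i j => F i j (p j)) ∈ S
      · rw [if_pos (fun p hp => hc p (Finset.mem_coe.1 hp)), if_pos hc]
        exact Finset.prod_congr rfl fun i _ => (if_pos (hFT i)).symm
      · rw [if_neg (fun hcond => hc (fun p hp => hcond p (Finset.mem_coe.2 hp))), if_neg hc]
  · intro f hf
    show 1 / (M : ℝ) ^ (2 ^ k : ℕ) ≤ if f ∈ T then H f else 0
    rw [if_pos (hTsup f hf).1]
    exact (hTsup f hf).2
end
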